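/- Let X ⊂ ℂ be a finite signal constellation with |X| = 2^m and let μ : X → {0,1}^m be a bijective binary labeling, with subconstellations X_b^i = {x ∈ X : i-th bit of μ(x) equals b}. Then for every snr > 0, the BICM mutual information I^bicm_X is differentiable at snr and its derivative satisfies d I^bicm_X(snr)/d snr = Σ_{i=1}^m (1/2) Σ_{b∈{0,1}} ( mmse_X(snr) − mmse_{X_b^i}(snr) ), where mmse_A denotes the minimum mean-squared error function of the constellation A. -/

import Mathlib

open MeasureTheory Finset

/-- Minimum mean-squared error in estimating the input, uniform on the finite
constellation `A ⊂ ℂ`, from the output of the complex Gaussian channel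
`y = √snr · x + z` with noise density `(1/π) exp(-|z|²)`. -/
noncomputable def mmse (A : Finset ℂ) (snr : ℝ) : ℝ :=
  (1 / (A.card : ℝ)) * ∑ a ∈ A, (‖a‖) ^ 2
  - (1 / (A.card : ℝ)) * ∑ a ∈ A, (1 / Real.pi) *
      ∫ z : ℂ, (‖
          ((∑ a' ∈ A, a' * (Real.exp (-(‖(Real.sqrt snr : ℂ) * (a - a') + z‖) ^ 2) : ℂ)) /
           (∑ a' ∈ A, (Real.exp (-(‖(Real.sqrt snr : ℂ) * (a - a') + z‖) ^ 2) : ℂ)))‖) ^ 2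
        * Real.exp (-(‖z‖) ^ 2)

/-- The subconstellation of points of `X` whose label has bit `b` in position `i`. -/
noncomputable def subconst (X : Finset ℂ) (m : ℕ) (μ : ℂ → (Fin m → Bool))
    (i : Fin m) (b : Bool) : Finset ℂ :=
  X.filter (fun x => μ x i = b)

/-- BICM mutual information of the constellation `X ⊂ ℂ`, `|X| = 2^m`, with
binary labeling `μ`, over the complex Gaussian channel `y = √snr · x + z`. -/
noncomputable def Ibicm (X : Finset ℂ) (m : ℕ) (μ : ℂ → (Fin m → Bool)) (snr : ℝ) : ℝ :=
  ∑ i : Fin m, (1 / 2 : ℝ) * ∑ b : Bool, (1 / (2 ^ (m - 1) : ℝ)) *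
    ∑ x ∈ subconst X m μ i b, (1 / Real.pi) *
      ∫ z : ℂ, Real.exp (-(‖z‖) ^ 2) *
        Real.log
          ((∑ x' ∈ subconst X m μ i b,
              Real.exp (-(‖(Real.sqrt snr : ℂ) * (x - x') + z‖) ^ 2)) /
           ((1 / 2 : ℝ) * ∑ x' ∈ X,
              Real.exp (-(‖(Real.sqrt snr : ℂ) * (x - x') + z‖) ^ 2)))

open Real

noncomputable section BicmAux

namespace BicmAux

/-- Gaussian channel factor, with amplitude parameter `t` (`t = √snr`). -/
def Ef (t : ℝ) (d z : ℂ) : ℝ := rexp (-Complex.normSq ((t:ℂ)*d + z))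

/-- Denominator: sum of Gaussian factors. -/
def Df (A : Finset ℂ) (a : ℂ) (t : ℝ) (z : ℂ) : ℝ := ∑ a' ∈ A, Ef t (a - a') z

/-- Numerator: weighted sum. -/
def Nf (A : Finset ℂ) (a : ℂ) (t : ℝ) (z : ℂ) : ℂ := ∑ a' ∈ A, a' * ((Ef t (a - a') z : ℝ) : ℂ)

lemma Ef_pos {t : ℝ} {d z : ℂ} : 0 < Ef t d z := Real.exp_pos _

lemma Ef_le_one {t : ℝ} {d z : ℂ} : Ef t d z ≤ 1 := by
  rw [Ef, Real.exp_le_one_iff, neg_nonpos]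
  exact Complex.normSq_nonneg _

lemma Df_pos {A : Finset ℂ} {a : ℂ} {t : ℝ} {z : ℂ} (hA : A.Nonempty) : 0 < Df A a t z :=
  Finset.sum_pos (fun _ _ => Ef_pos) hA

lemma Df_le_card {A : Finset ℂ} {a : ℂ} {t : ℝ} {z : ℂ} : Df A a t z ≤ A.card := by
  calc Df A a t z ≤ ∑ _a' ∈ A, (1:ℝ) := Finset.sum_le_sum (fun _ _ => Ef_le_one)
  _ = A.card := by simp

lemma abs_Nf_le {A : Finset ℂ} {a : ℂ} {t : ℝ} {z : ℂ} {K : ℝ}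
    (hK : ∀ a' ∈ A, ‖a'‖ ≤ K) : ‖(Nf A a t z)‖ ≤ K * Df A a t z := by
  rw [Nf, Df, Finset.mul_sum]
  refine (norm_sum_le _ _).trans (Finset.sum_le_sum (fun a' ha' => ?_))
  rw [norm_mul, Complex.norm_real, Real.norm_eq_abs, abs_of_nonneg Ef_pos.le]
  exact mul_le_mul_of_nonneg_right (hK a' ha') Ef_pos.le

lemma abs_est_le {A : Finset ℂ} {a : ℂ} {t : ℝ} {z : ℂ} {K : ℝ} (hA : A.Nonempty)
    (hK : ∀ a' ∈ A, ‖a'‖ ≤ K) :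
    ‖(Nf A a t z / (Df A a t z : ℝ))‖ ≤ K := by
  rw [norm_div]
  rw [div_le_iff₀ (by simpa [Complex.norm_of_nonneg (Df_pos hA).le] using (Df_pos (a := a) (t := t) (z := z) hA).ne')]
  calc ‖(Nf A a t z)‖ ≤ K * Df A a t z := abs_Nf_le hK
  _ = K * ‖((Df A a t z : ℝ) : ℂ)‖ := by
      rw [Complex.norm_real, Real.norm_eq_abs, abs_of_nonneg (Df_pos hA).le]

lemma continuous_Ef_z {t : ℝ} {d : ℂ} : Continuous (fun z => Ef t d z) :=
  Real.continuous_exp.comp (Complex.continuous_normSq.comp (continuous_const.add continuous_id)).neg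

lemma continuous_Df_z {A : Finset ℂ} {a : ℂ} {t : ℝ} : Continuous (fun z => Df A a t z) :=
  continuous_finset_sum _ (fun _ _ => continuous_Ef_z)

lemma continuous_Nf_z {A : Finset ℂ} {a : ℂ} {t : ℝ} : Continuous (fun z => Nf A a t z) :=
  continuous_finset_sum _ (fun _ _ =>
    continuous_const.mul (Complex.continuous_ofReal.comp continuous_Ef_z))

lemma continuous_gauss : Continuous (fun z : ℂ => rexp (-Complex.normSq z)) :=
  Real.continuous_exp.comp Complex.continuous_normSq.neg

/-! ### Transfer between `ℂ` and `ℝ × ℝ` -/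

lemma integral_complex_eq (g : ℝ × ℝ → ℝ) :
    ∫ z : ℂ, g (z.re, z.im) = ∫ p : ℝ × ℝ, g p :=
  Complex.volume_preserving_equiv_real_prod.integral_comp
    Complex.measurableEquivRealProd.measurableEmbedding g

lemma integrable_complex_iff (g : ℝ × ℝ → ℝ) :
    Integrable (fun z : ℂ => g (z.re, z.im)) ↔ Integrable g :=
  Complex.volume_preserving_equiv_real_prod.integrable_comp_emb
    Complex.measurableEquivRealProd.measurableEmbedding

/-! ### Gaussian integrability toolkit -/

lemma integrable_gauss_c {c : ℝ} (hc : 0 < c) :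
    Integrable (fun z : ℂ => rexp (-c * Complex.normSq z)) := by
  have h : ∀ z : ℂ, rexp (-c * Complex.normSq z)
      = (fun p : ℝ × ℝ => rexp (-c * p.1^2) * rexp (-c * p.2^2)) (z.re, z.im) := by
    intro z
    simp only [← Real.exp_add, Complex.normSq_apply]
    ring_nf
  simp only [h]
  exact (integrable_complex_iff (fun p : ℝ × ℝ => rexp (-c * p.1^2) * rexp (-c * p.2^2))).2
    ((integrable_exp_neg_mul_sq hc).mul_prod (integrable_exp_neg_mul_sq hc))

lemma integral_gauss_complex : (∫ z : ℂ, rexp (-Complex.normSq z)) = π := by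
  have h : ∀ z : ℂ, rexp (-Complex.normSq z)
      = (fun p : ℝ × ℝ => rexp (-(1:ℝ) * p.1^2) * rexp (-(1:ℝ) * p.2^2)) (z.re, z.im) := by
    intro z
    simp only [← Real.exp_add, Complex.normSq_apply]
    ring_nf
  simp only [h]
  rw [integral_complex_eq (fun p : ℝ × ℝ => rexp (-(1:ℝ) * p.1^2) * rexp (-(1:ℝ) * p.2^2)),
    Measure.volume_eq_prod,
    integral_prod_mul (fun x : ℝ => rexp (-(1:ℝ) * x^2)) (fun y : ℝ => rexp (-(1:ℝ) * y^2)),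
    integral_gaussian]
  rw [← Real.sqrt_mul_self (le_of_lt Real.pi_pos)]
  norm_num

/-- key pointwise bound: `(C₀ + C₁ r) e^{-r} ≤ (|C₀| + 2|C₁|) e^{-r/2}` for `r ≥ 0`. -/
lemma poly_gauss_bound (C₀ C₁ : ℝ) {r : ℝ} (hr : 0 ≤ r) :
    (C₀ + C₁ * r) * rexp (-r) ≤ (|C₀| + 2*|C₁|) * rexp (-((1:ℝ)/2) * r) := by
  have he : rexp (-r) = rexp (-((1:ℝ)/2) * r) * rexp (-(r/2)) := by
    rw [← Real.exp_add]; ring_nf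
  have hre : r * rexp (-(r/2)) ≤ 2 := by
    have h1 : r/2 ≤ rexp (r/2) := by
      have := Real.add_one_le_exp (r/2); linarith
    have h2 : r * rexp (-(r/2)) = (r/2) * rexp (-(r/2)) * 2 := by ring
    rw [h2]
    have h3 : (r/2) * rexp (-(r/2)) ≤ rexp (r/2) * rexp (-(r/2)) :=
      mul_le_mul_of_nonneg_right h1 (Real.exp_pos _).le
    rw [← Real.exp_add] at h3
    simp only [add_neg_cancel, Real.exp_zero] at h3
    linarith
  have hle1 : rexp (-(r/2)) ≤ 1 := Real.exp_le_one_iff.2 (by linarith)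
  have h4 : (C₀ + C₁ * r) ≤ |C₀| + |C₁| * r := by
    have := abs_nonneg C₁
    have h5 : C₁ * r ≤ |C₁| * r := mul_le_mul_of_nonneg_right (le_abs_self _) hr
    have := le_abs_self C₀
    linarith
  calc (C₀ + C₁ * r) * rexp (-r) ≤ (|C₀| + |C₁| * r) * rexp (-r) :=
        mul_le_mul_of_nonneg_right h4 (Real.exp_pos _).le
  _ = (|C₀| * rexp (-(r/2)) + |C₁| * (r * rexp (-(r/2)))) * rexp (-((1:ℝ)/2) * r) := by
        rw [he]; ring
  _ ≤ (|C₀| * 1 + |C₁| * 2) * rexp (-((1:ℝ)/2) * r) := by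
        refine mul_le_mul_of_nonneg_right (add_le_add ?_ ?_) (Real.exp_pos _).le
        · exact mul_le_mul_of_nonneg_left hle1 (abs_nonneg _)
        · exact mul_le_mul_of_nonneg_left hre (abs_nonneg _)
  _ = (|C₀| + 2*|C₁|) * rexp (-((1:ℝ)/2) * r) := by ring

/-- Master integrability on `ℂ`: domination by `(C₀ + C₁‖z‖²) e^{-‖z‖²}`. -/
lemma integrable_dom {f : ℂ → ℝ} (hm : AEStronglyMeasurable f volume) (C₀ C₁ : ℝ)
    (hb : ∀ z, |f z| ≤ (C₀ + C₁ * Complex.normSq z) * rexp (-Complex.normSq z)) :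
    Integrable f := by
  refine (((integrable_gauss_c (by norm_num : (0:ℝ) < 1/2)).const_mul
    (|C₀| + 2*|C₁|)).mono' hm ?_)
  filter_upwards with z
  rw [Real.norm_eq_abs]
  exact (hb z).trans (poly_gauss_bound C₀ C₁ (Complex.normSq_nonneg z))

/-- 1D version. -/
lemma integrable_dom1 {f : ℝ → ℝ} (hm : AEStronglyMeasurable f volume) (C₀ C₁ : ℝ)
    (hb : ∀ x, |f x| ≤ (C₀ + C₁ * x^2) * rexp (-x^2)) :
    Integrable f := by
  have : Integrable (fun x : ℝ => (|C₀| + 2*|C₁|) * rexp (-((1:ℝ)/2) * x^2)) :=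
    (integrable_exp_neg_mul_sq (by norm_num : (0:ℝ) < 1/2)).const_mul _
  refine this.mono' hm ?_
  filter_upwards with x
  rw [Real.norm_eq_abs]
  exact (hb x).trans (poly_gauss_bound C₀ C₁ (sq_nonneg x))

/-! ### Derivatives in `t` -/

/-- `∂ₜ normSq ((t:ℂ)*d + z)`. -/
def dq (t : ℝ) (d z : ℂ) : ℝ := 2*((t*d.re+z.re)*d.re + (t*d.im+z.im)*d.im)

lemma normSq_expand (t : ℝ) (d z : ℂ) :
    Complex.normSq ((t:ℂ)*d + z) = (t*d.re+z.re)^2 + (t*d.im+z.im)^2 := by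
  simp only [Complex.normSq_apply, Complex.add_re, Complex.add_im, Complex.mul_re,
    Complex.mul_im, Complex.ofReal_re, Complex.ofReal_im]
  ring

lemma hasDerivAt_Ef_t (t : ℝ) (d z : ℂ) :
    HasDerivAt (fun t => Ef t d z) (-(dq t d z) * Ef t d z) t := by
  have h : (fun t => Ef t d z) = fun t => rexp (-((t*d.re+z.re)^2 + (t*d.im+z.im)^2)) := by
    funext t; rw [Ef, normSq_expand]
  rw [h]
  have h1 : HasDerivAt (fun t : ℝ => t*d.re+z.re) d.re t :=
    (hasDerivAt_mul_const d.re).add_const z.re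
  have h2 : HasDerivAt (fun t : ℝ => t*d.im+z.im) d.im t :=
    (hasDerivAt_mul_const d.im).add_const z.im
  have h3 := (((h1.fun_pow 2).fun_add (h2.fun_pow 2)).fun_neg).exp
  refine h3.congr_deriv (Eq.symm ?_)
  rw [Ef, normSq_expand, dq]
  ring

/-- `∂ₜ Df`. -/
def Dft (A : Finset ℂ) (a : ℂ) (t : ℝ) (z : ℂ) : ℝ :=
  ∑ a' ∈ A, -(dq t (a - a') z) * Ef t (a - a') z

lemma hasDerivAt_Df_t (A : Finset ℂ) (a : ℂ) (t : ℝ) (z : ℂ) :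
    HasDerivAt (fun t => Df A a t z) (Dft A a t z) t :=
  HasDerivAt.fun_sum (fun a' _ => hasDerivAt_Ef_t t (a - a') z)

lemma abs_le_one_add_normSq (z : ℂ) : ‖z‖ ≤ 1 + Complex.normSq z := by
  rcases le_total (‖z‖) 1 with h | h
  · have := Complex.normSq_nonneg z; linarith
  · have h2 : ‖z‖ ≤ ‖z‖ * ‖z‖ := by
      nlinarith [norm_nonneg z]
    have h3 : ‖z‖ * ‖z‖ = Complex.normSq z := by
      rw [← Complex.sq_norm]; ring
    have := Complex.normSq_nonneg z
    linarith [h2.trans_eq h3]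

lemma dq_le {t : ℝ} {d z : ℂ} :
    |dq t d z| ≤ 2 * |t| *Complex.normSq d + 4*(‖d‖)*(‖z‖) := by
  rw [dq]
  have hre_d := Complex.abs_re_le_norm d
  have him_d := Complex.abs_im_le_norm d
  have hre_z := Complex.abs_re_le_norm z
  have him_z := Complex.abs_im_le_norm z
  have h1 : |2*((t*d.re+z.re)*d.re + (t*d.im+z.im)*d.im)|
      = |2*(t*(d.re*d.re + d.im*d.im) + (z.re*d.re + z.im*d.im))| := by ring_nf
  rw [h1]
  have h2 : |z.re*d.re + z.im*d.im| ≤ 2*(‖d‖)*(‖z‖) := by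
    calc |z.re*d.re + z.im*d.im| ≤ |z.re*d.re| + |z.im*d.im| := abs_add_le _ _
    _ = |z.re| * |d.re| + |z.im| * |d.im| := by rw [abs_mul, abs_mul]
    _ ≤ (‖z‖)*(‖d‖) + (‖z‖)*(‖d‖) := by
        have h4 := norm_nonneg z
        have h5 := norm_nonneg d
        have h6 := abs_nonneg z.re
        have h7 := abs_nonneg z.im
        nlinarith [mul_le_mul hre_z hre_d (abs_nonneg d.re) (norm_nonneg z),
          mul_le_mul him_z him_d (abs_nonneg d.im) (norm_nonneg z)]
    _ = 2*(‖d‖)*(‖z‖) := by ring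
  have h3 : |t*(d.re*d.re + d.im*d.im)| = |t| * Complex.normSq d := by
    rw [abs_mul, Complex.normSq_apply, abs_of_nonneg (by nlinarith [sq_nonneg d.re, sq_nonneg d.im] : (0:ℝ) ≤ d.re*d.re + d.im*d.im)]
  calc |2*(t*(d.re*d.re + d.im*d.im) + (z.re*d.re + z.im*d.im))|
      = 2*|t*(d.re*d.re + d.im*d.im) + (z.re*d.re + z.im*d.im)| := by
        rw [abs_mul]; norm_num
  _ ≤ 2*(|t*(d.re*d.re + d.im*d.im)| + |z.re*d.re + z.im*d.im|) := by
        have := abs_add_le (t*(d.re*d.re + d.im*d.im)) (z.re*d.re + z.im*d.im)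
        linarith
  _ ≤ 2*(|t| * Complex.normSq d + 2*(‖d‖)*(‖z‖)) := by
        rw [h3]; linarith [h2]
  _ = 2 * |t| *Complex.normSq d + 4*(‖d‖)*(‖z‖) := by ring

/-- bound for a ratio of weighted sums by the max of coefficients. -/
lemma ratio_le {A : Finset ℂ} (hA : A.Nonempty) {a : ℂ} {t : ℝ} {z : ℂ} {c : ℂ → ℝ} {C : ℝ}
    (h : ∀ a' ∈ A, |c a'| ≤ C) :
    |(∑ a' ∈ A, c a' * Ef t (a - a') z) / Df A a t z| ≤ C := by
  rw [abs_div, abs_of_nonneg (Df_pos hA).le, div_le_iff₀ (Df_pos hA)]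
  calc |∑ a' ∈ A, c a' * Ef t (a - a') z| ≤ ∑ a' ∈ A, |c a' * Ef t (a - a') z| :=
        Finset.abs_sum_le_sum_abs _ _
  _ ≤ ∑ a' ∈ A, C * Ef t (a - a') z := by
      refine Finset.sum_le_sum (fun a' ha' => ?_)
      rw [abs_mul, abs_of_nonneg Ef_pos.le]
      exact mul_le_mul_of_nonneg_right (h a' ha') Ef_pos.le
  _ = C * Df A a t z := by rw [Df, Finset.mul_sum]

lemma abs_sub_le_two {A : Finset ℂ} {a a' : ℂ} {K : ℝ} (hK : ∀ x ∈ A, ‖x‖ ≤ K)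
    (hKa : ‖a‖ ≤ K) (ha' : a' ∈ A) : ‖(a - a')‖ ≤ 2*K := by
  calc ‖(a - a')‖ ≤ ‖a‖ + ‖a'‖ := by
        simpa [sub_eq_add_neg] using norm_add_le a (-a')
  _ ≤ K + K := add_le_add hKa (hK a' ha')
  _ = 2*K := by ring

lemma continuous_dq_z {t : ℝ} {d : ℂ} : Continuous (fun z => dq t d z) := by
  unfold dq
  fun_prop

lemma continuous_Dft_z {A : Finset ℂ} {a : ℂ} {t : ℝ} : Continuous (fun z => Dft A a t z) :=
  continuous_finset_sum _ (fun _ _ => (continuous_dq_z.neg).mul continuous_Ef_z)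

lemma continuous_logDf_z {A : Finset ℂ} (hA : A.Nonempty) {a : ℂ} {t : ℝ} :
    Continuous (fun z => Real.log (Df A a t z)) :=
  continuous_Df_z.log (fun z => (Df_pos hA).ne')

/-- Differentiation under the integral sign for `∫ e^{-|z|²} log D`. -/
lemma hasDerivAt_int_log (A : Finset ℂ) (hA : A.Nonempty) (a : ℂ) {K : ℝ}
    (hK : ∀ x ∈ A, ‖x‖ ≤ K) (hKa : ‖a‖ ≤ K) {t₀ : ℝ} (ht : 0 < t₀) :
    HasDerivAt (fun t => ∫ z : ℂ, rexp (-Complex.normSq z) * Real.log (Df A a t z))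
      (∫ z : ℂ, rexp (-Complex.normSq z) * (Dft A a t₀ z / Df A a t₀ z)) t₀ := by
  have hK0 : 0 ≤ K := (norm_nonneg a).trans hKa
  -- the uniform coefficient bound on the ball of radius 1
  have key : ∀ t ∈ Metric.ball t₀ 1, ∀ z : ℂ, ∀ a' ∈ A,
      |(-(dq t (a - a') z))| ≤ (8*K^2 * (|t₀|+1) + 8*K) + 8*K * Complex.normSq z := by
    intro t htball z a' ha'
    have habs : ‖(a - a')‖ ≤ 2*K := abs_sub_le_two hK hKa ha'
    have hns : Complex.normSq (a - a') ≤ 4*K^2 := by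
      rw [← Complex.sq_norm]
      nlinarith [norm_nonneg (a - a')]
    have ht' : |t| ≤ |t₀| + 1 := by
      have := Metric.mem_ball.1 htball
      rw [Real.dist_eq] at this
      calc |t| = |t₀ + (t - t₀)| := by ring_nf
      _ ≤ |t₀| + |t - t₀| := abs_add_le _ _
      _ ≤ |t₀| + 1 := by linarith [abs_sub_comm t t₀ ▸ this.le]
    rw [abs_neg]
    calc |dq t (a - a') z| ≤ 2 * |t| *Complex.normSq (a - a') + 4*(‖(a - a')‖)*(‖z‖) := dq_le
    _ ≤ 2 * (|t₀|+1)*(4*K^2) + 4*(2*K)*(1 + Complex.normSq z) := by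
        have h1 : 2 * |t| *Complex.normSq (a-a') ≤ 2 * (|t₀|+1)*(4*K^2) := by
          have := Complex.normSq_nonneg (a - a')
          have := abs_nonneg t
          nlinarith
        have h2 : 4*(‖(a-a')‖)*(‖z‖) ≤ 4*(2*K)*(1 + Complex.normSq z) := by
          have h3 := abs_le_one_add_normSq z
          have := norm_nonneg (a - a')
          have := norm_nonneg z
          have := Complex.normSq_nonneg z
          nlinarith
        linarith
    _ ≤ (8*K^2 * (|t₀|+1) + 8*K) + 8*K * Complex.normSq z := by nlinarith [Complex.normSq_nonneg z]
  set C₀ : ℝ := 8*K^2 * (|t₀|+1) + 8*K with hC₀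
  set C₁ : ℝ := 8*K with hC₁
  have hC₀0 : 0 ≤ C₀ := by positivity
  have hC₁0 : 0 ≤ C₁ := by positivity
  have main := hasDerivAt_integral_of_dominated_loc_of_deriv_le (μ := (volume : Measure ℂ))
    (F := fun t z => rexp (-Complex.normSq z) * Real.log (Df A a t z))
    (F' := fun t z => rexp (-Complex.normSq z) * (Dft A a t z / Df A a t z))
    (x₀ := t₀) (bound := fun z => (C₀ + C₁ * Complex.normSq z) * rexp (-Complex.normSq z))
    (s := Metric.ball t₀ 1) (Metric.ball_mem_nhds t₀ one_pos)
    (Filter.Eventually.of_forall (fun t =>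
      (continuous_gauss.mul (continuous_logDf_z hA)).aestronglyMeasurable))
    ?_ ?_ ?_ ?_ ?_
  · exact main.2
  · -- integrability of F t₀
    refine integrable_dom ((continuous_gauss.mul (continuous_logDf_z hA)).aestronglyMeasurable)
      (Real.log A.card + 8*t₀^2*K^2) 2 (fun z => ?_)
    obtain ⟨a₀, ha₀⟩ := id hA
    have hpos := Df_pos (A := A) (a := a) (t := t₀) (z := z) ⟨a₀, ha₀⟩
    have hub : Real.log (Df A a t₀ z) ≤ Real.log A.card :=
      Real.log_le_log hpos Df_le_card
    have hlb : -(Real.log (Df A a t₀ z)) ≤ 8*t₀^2*K^2 + 2*Complex.normSq z := by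
      have h1 : Ef t₀ (a - a₀) z ≤ Df A a t₀ z :=
        Finset.single_le_sum (fun x _ => (Ef_pos (t := t₀) (d := a - x) (z := z)).le) ha₀
      have h2 : Real.log (Ef t₀ (a - a₀) z) ≤ Real.log (Df A a t₀ z) :=
        Real.log_le_log Ef_pos h1
      rw [Ef, Real.log_exp] at h2
      have h3 : Complex.normSq ((t₀:ℂ)*(a - a₀) + z) ≤ 8*t₀^2*K^2 + 2*Complex.normSq z := by
        have h4 : ‖((t₀:ℂ)*(a - a₀) + z)‖ ≤ ‖((t₀:ℂ)*(a - a₀))‖ + ‖z‖ :=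
          norm_add_le _ _
        have h5 : ‖((t₀:ℂ)*(a-a₀))‖ = |t₀| * ‖(a - a₀)‖ := by
          rw [norm_mul, Complex.norm_real, Real.norm_eq_abs]
        have h6 : ‖(a - a₀)‖ ≤ 2*K := abs_sub_le_two hK hKa ha₀
        have h7 := Complex.sq_norm ((t₀:ℂ)*(a - a₀) + z)
        have h8 := Complex.sq_norm z
        have hXY : ‖((t₀:ℂ)*(a - a₀) + z)‖ ≤ |t₀| * ‖(a - a₀)‖ + ‖z‖ := by
          rw [← h5]; exact h4
        have h9 : Complex.normSq ((t₀:ℂ)*(a - a₀) + z)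
            ≤ (|t₀| * ‖(a - a₀)‖ + ‖z‖)^2 := by
          rw [← h7]
          exact pow_le_pow_left₀ (norm_nonneg _) hXY 2
        have h10 : (|t₀| * ‖(a - a₀)‖ + ‖z‖)^2
            ≤ 2*(|t₀| * ‖(a - a₀)‖)^2 + 2*(‖z‖)^2 := by
          nlinarith [sq_nonneg (|t₀| * ‖(a - a₀)‖ - ‖z‖)]
        have h11 : (|t₀| * ‖(a - a₀)‖)^2 ≤ t₀^2 * (4*K^2) := by
          have hD := norm_nonneg (a - a₀)
          have hD2 : (‖(a - a₀)‖)^2 ≤ 4*K^2 := by nlinarith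
          have heq : (|t₀| * ‖(a - a₀)‖)^2 = t₀^2 * (‖(a - a₀)‖)^2 := by
            rw [mul_pow, sq_abs]
          rw [heq]
          exact mul_le_mul_of_nonneg_left hD2 (sq_nonneg t₀)
        nlinarith
      linarith
    have hlog0 : (0:ℝ) ≤ Real.log A.card := by
      have : (1:ℝ) ≤ A.card := by
        have := Finset.card_pos.2 hA
        exact_mod_cast this
      exact Real.log_nonneg this
    rw [abs_mul, abs_of_nonneg (Real.exp_pos _).le, mul_comm]
    refine mul_le_mul_of_nonneg_right ?_ (Real.exp_pos _).le
    rw [abs_le]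
    constructor
    · have := Complex.normSq_nonneg z; nlinarith
    · have := Complex.normSq_nonneg z; nlinarith
  · exact (continuous_gauss.mul (continuous_Dft_z.div continuous_Df_z
      (fun z => (Df_pos hA).ne'))).aestronglyMeasurable
  · -- the bound
    refine Filter.Eventually.of_forall (fun z => fun t htb => ?_)
    rw [Real.norm_eq_abs, abs_mul, abs_of_nonneg (Real.exp_pos _).le, mul_comm]
    refine mul_le_mul_of_nonneg_right ?_ (Real.exp_pos _).le
    have : |Dft A a t z / Df A a t z| ≤ C₀ + C₁ * Complex.normSq z := by
      refine ratio_le hA (fun a' ha' => key t htb z a' ha')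
    exact this
  · -- integrability of the bound
    refine integrable_dom ?_ C₀ C₁ (fun z => ?_)
    · exact ((continuous_const.add (continuous_const.mul
        Complex.continuous_normSq)).mul continuous_gauss).aestronglyMeasurable
    · rw [abs_of_nonneg (mul_nonneg (by nlinarith [Complex.normSq_nonneg z]) (Real.exp_pos _).le)]
  · -- differentiability
    refine Filter.Eventually.of_forall (fun z => fun t _ => ?_)
    exact ((hasDerivAt_Df_t A a t z).log (Df_pos hA).ne').const_mul _

/-! ### Integration by parts in 2D -/

lemma continuous_mk_x (y : ℝ) : Continuous (fun x : ℝ => (⟨x, y⟩ : ℂ)) := by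
  have h : (fun x : ℝ => (⟨x, y⟩ : ℂ)) = fun x : ℝ => (x:ℂ) + (y:ℂ)*Complex.I := by
    funext x; rw [Complex.mk_eq_add_mul_I]
  rw [h]; fun_prop

lemma continuous_mk_y (x : ℝ) : Continuous (fun y : ℝ => (⟨x, y⟩ : ℂ)) := by
  have h : (fun y : ℝ => (⟨x, y⟩ : ℂ)) = fun y : ℝ => (x:ℂ) + (y:ℂ)*Complex.I := by
    funext y; rw [Complex.mk_eq_add_mul_I]
  rw [h]; fun_prop

/-- transfer of an integral over `ℂ` to an iterated integral, inner over the real part. -/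
lemma integral_c_eq_iterated_x (f : ℂ → ℝ) (hf : Integrable f (volume : Measure ℂ)) :
    ∫ z : ℂ, f z = ∫ y : ℝ, ∫ x : ℝ, f ⟨x, y⟩ := by
  have h1 : ∫ z : ℂ, f z = ∫ p : ℝ × ℝ, f ⟨p.1, p.2⟩ := by
    rw [← integral_complex_eq (fun p : ℝ × ℝ => f ⟨p.1, p.2⟩)]
  have h2 : Integrable (fun p : ℝ × ℝ => f ⟨p.1, p.2⟩) := by
    rw [← integrable_complex_iff (fun p : ℝ × ℝ => f ⟨p.1, p.2⟩)]
    exact hf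
  rw [h1]
  rw [Measure.volume_eq_prod] at h2 ⊢
  exact integral_prod_symm _ h2

/-- transfer of an integral over `ℂ` to an iterated integral, inner over the imaginary part. -/
lemma integral_c_eq_iterated_y (f : ℂ → ℝ) (hf : Integrable f (volume : Measure ℂ)) :
    ∫ z : ℂ, f z = ∫ x : ℝ, ∫ y : ℝ, f ⟨x, y⟩ := by
  have h1 : ∫ z : ℂ, f z = ∫ p : ℝ × ℝ, f ⟨p.1, p.2⟩ := by
    rw [← integral_complex_eq (fun p : ℝ × ℝ => f ⟨p.1, p.2⟩)]
  have h2 : Integrable (fun p : ℝ × ℝ => f ⟨p.1, p.2⟩) := by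
    rw [← integrable_complex_iff (fun p : ℝ × ℝ => f ⟨p.1, p.2⟩)]
    exact hf
  rw [h1]
  rw [Measure.volume_eq_prod] at h2 ⊢
  exact integral_prod _ h2

lemma hasDerivAt_gauss1 (x : ℝ) :
    HasDerivAt (fun x : ℝ => -(1/2) * rexp (-x^2)) (x * rexp (-x^2)) x := by
  have h := (((hasDerivAt_id x).fun_pow 2).fun_neg.exp).const_mul (-(1/2) : ℝ)
  refine h.congr_deriv (Eq.symm ?_)
  simp only [id_eq, Nat.cast_ofNat, pow_one]
  ring

/-- 1D Gaussian integration by parts, for bounded `u` with bounded derivative. -/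
lemma ibp_1d (u u' : ℝ → ℝ) (hu : ∀ x, HasDerivAt u (u' x) x)
    (hc : Continuous u) (hc' : Continuous u')
    (B B' : ℝ) (hB : ∀ x, |u x| ≤ B) (hB' : ∀ x, |u' x| ≤ B') :
    ∫ x : ℝ, x * rexp (-x^2) * u x = (1/2) * ∫ x : ℝ, rexp (-x^2) * u' x := by
  have hgauss : ∀ x : ℝ, rexp (-x^2) ≤ rexp (-x^2) := fun _ => le_rfl
  have key := integral_mul_deriv_eq_deriv_mul_of_integrable
    (u := u) (v := fun x : ℝ => -(1/2) * rexp (-x^2))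
    (u' := u') (v' := fun x : ℝ => x * rexp (-x^2))
    (fun x _ => hu x) (fun x _ => hasDerivAt_gauss1 x) ?_ ?_ ?_
  · have h1 : ∫ x : ℝ, u x * (x * rexp (-x^2)) = ∫ x : ℝ, x * rexp (-x^2) * u x := by
      congr 1; funext x; ring
    have h2 : (∫ x : ℝ, u' x * (-(1/2) * rexp (-x^2))) = -(1/2) * ∫ x : ℝ, rexp (-x^2) * u' x := by
      rw [← integral_const_mul]
      congr 1; funext x; ring
    rw [h1] at key
    rw [key, h2]
    ring
  · -- Integrable (u * v')
    refine integrable_dom1 ((hc.mul ((continuous_id.mul (Real.continuous_exp.comp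
      ((continuous_pow 2).neg))))).aestronglyMeasurable) B B (fun x => ?_)
    have hx : |x| ≤ 1 + x^2 := by nlinarith [sq_nonneg (|x| - 1), abs_nonneg x, sq_abs x]
    have hBnn : 0 ≤ B := (abs_nonneg _).trans (hB 0)
    simp only [Pi.mul_apply]
    rw [abs_mul, abs_mul, abs_of_nonneg (Real.exp_pos _).le]
    calc |u x| * (|x| * rexp (-x^2)) ≤ B * ((1 + x^2) * rexp (-x^2)) := by
          have := abs_nonneg x
          have := (Real.exp_pos (-x^2)).le
          have h5 : |x| * rexp (-x^2) ≤ (1 + x^2) * rexp (-x^2) :=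
            mul_le_mul_of_nonneg_right hx this
          have h6 : |u x| * (|x| * rexp (-x^2)) ≤ B * (|x| * rexp (-x^2)) :=
            mul_le_mul_of_nonneg_right (hB x) (by positivity)
          have h7 : B * (|x| * rexp (-x^2)) ≤ B * ((1 + x^2) * rexp (-x^2)) :=
            mul_le_mul_of_nonneg_left h5 hBnn
          linarith
    _ = (B + B * x^2) * rexp (-x^2) := by ring
  · -- Integrable (u' * v)
    refine integrable_dom1 ((hc'.mul ((continuous_const.mul (Real.continuous_exp.comp
      ((continuous_pow 2).neg))))).aestronglyMeasurable) (B'/2) 0 (fun x => ?_)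
    simp only [Pi.mul_apply]
    rw [abs_mul, abs_mul, abs_of_nonneg (Real.exp_pos _).le]
    have h8 : |(-(1/2) : ℝ)| = 1/2 := by norm_num
    rw [h8]
    have hBnn : 0 ≤ B' := (abs_nonneg _).trans (hB' 0)
    calc |u' x| * (1/2 * rexp (-x^2)) ≤ B' * (1/2 * rexp (-x^2)) :=
          mul_le_mul_of_nonneg_right (hB' x) (by positivity)
    _ = (B'/2 + 0 * x^2) * rexp (-x^2) := by ring
  · -- Integrable (u * v)
    refine integrable_dom1 ((hc.mul ((continuous_const.mul (Real.continuous_exp.comp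
      ((continuous_pow 2).neg))))).aestronglyMeasurable) (B/2) 0 (fun x => ?_)
    simp only [Pi.mul_apply]
    rw [abs_mul, abs_mul, abs_of_nonneg (Real.exp_pos _).le]
    have h8 : |(-(1/2) : ℝ)| = 1/2 := by norm_num
    rw [h8]
    have hBnn : 0 ≤ B := (abs_nonneg _).trans (hB 0)
    calc |u x| * (1/2 * rexp (-x^2)) ≤ B * (1/2 * rexp (-x^2)) :=
          mul_le_mul_of_nonneg_right (hB x) (by positivity)
    _ = (B/2 + 0 * x^2) * rexp (-x^2) := by ring

/-- 2D Gaussian IBP, `x`-direction. -/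
lemma ibp_x (H Hx : ℂ → ℝ) (hH : Continuous H) (hHx : Continuous Hx)
    (hd : ∀ y x : ℝ, HasDerivAt (fun x : ℝ => H ⟨x, y⟩) (Hx ⟨x, y⟩) x)
    (B B' : ℝ) (hB : ∀ z, |H z| ≤ B) (hB' : ∀ z, |Hx z| ≤ B') :
    ∫ z : ℂ, rexp (-Complex.normSq z) * (z.re * H z)
      = (1/2) * ∫ z : ℂ, rexp (-Complex.normSq z) * Hx z := by
  have hBnn : 0 ≤ B := (abs_nonneg _).trans (hB 0)
  have hB'nn : 0 ≤ B' := (abs_nonneg _).trans (hB' 0)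
  have hint1 : Integrable (fun z : ℂ => rexp (-Complex.normSq z) * (z.re * H z)) := by
    refine integrable_dom ((continuous_gauss.mul ((Complex.continuous_re.mul hH))).aestronglyMeasurable)
      B B (fun z => ?_)
    rw [abs_mul, abs_of_nonneg (Real.exp_pos _).le, abs_mul, mul_comm]
    refine mul_le_mul_of_nonneg_right ?_ (Real.exp_pos _).le
    have h1 : |z.re| ≤ 1 + Complex.normSq z :=
      (Complex.abs_re_le_norm z).trans (abs_le_one_add_normSq z)
    calc |z.re| * |H z| ≤ (1 + Complex.normSq z) * B := by
          have := Complex.normSq_nonneg z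
          have := abs_nonneg z.re
          nlinarith [hB z, abs_nonneg (H z)]
    _ = B + B * Complex.normSq z := by ring
  have hint2 : Integrable (fun z : ℂ => rexp (-Complex.normSq z) * Hx z) := by
    refine integrable_dom ((continuous_gauss.mul hHx).aestronglyMeasurable) B' 0 (fun z => ?_)
    rw [abs_mul, abs_of_nonneg (Real.exp_pos _).le, mul_comm]
    refine mul_le_mul_of_nonneg_right ?_ (Real.exp_pos _).le
    simpa using hB' z
  rw [integral_c_eq_iterated_x _ hint1, integral_c_eq_iterated_x _ hint2]
  rw [← integral_const_mul]
  congr 1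
  funext y
  have hl : ∀ x : ℝ, rexp (-Complex.normSq (⟨x, y⟩ : ℂ)) * ((⟨x, y⟩ : ℂ).re * H ⟨x, y⟩)
      = rexp (-y^2) * (x * rexp (-x^2) * H ⟨x, y⟩) := by
    intro x
    rw [Complex.normSq_mk]
    show rexp (-(x*x + y*y)) * (x * H ⟨x, y⟩) = _
    rw [show -(x*x+y*y) = -x^2 + -y^2 by ring, Real.exp_add]
    ring
  have hr : ∀ x : ℝ, rexp (-Complex.normSq (⟨x, y⟩ : ℂ)) * Hx ⟨x, y⟩
      = rexp (-y^2) * (rexp (-x^2) * Hx ⟨x, y⟩) := by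
    intro x
    rw [Complex.normSq_mk, show -(x*x+y*y) = -x^2 + -y^2 by ring, Real.exp_add]
    ring
  calc ∫ x : ℝ, rexp (-Complex.normSq (⟨x, y⟩ : ℂ)) * ((⟨x, y⟩ : ℂ).re * H ⟨x, y⟩)
      = rexp (-y^2) * ∫ x : ℝ, x * rexp (-x^2) * H ⟨x, y⟩ := by
        rw [← integral_const_mul]; congr 1; funext x; rw [hl x]
  _ = rexp (-y^2) * ((1/2) * ∫ x : ℝ, rexp (-x^2) * Hx ⟨x, y⟩) := by
        congr 1
        exact ibp_1d (fun x => H ⟨x, y⟩) (fun x => Hx ⟨x, y⟩) (hd y)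
          (hH.comp (continuous_mk_x y)) (hHx.comp (continuous_mk_x y))
          B B' (fun x => hB _) (fun x => hB' _)
  _ = (1/2) * ∫ x : ℝ, rexp (-Complex.normSq (⟨x, y⟩ : ℂ)) * Hx ⟨x, y⟩ := by
        simp only [hr]
        rw [integral_const_mul]
        ring

/-- 2D Gaussian IBP, `y`-direction. -/
lemma ibp_y (H Hy : ℂ → ℝ) (hH : Continuous H) (hHy : Continuous Hy)
    (hd : ∀ x y : ℝ, HasDerivAt (fun y : ℝ => H ⟨x, y⟩) (Hy ⟨x, y⟩) y)
    (B B' : ℝ) (hB : ∀ z, |H z| ≤ B) (hB' : ∀ z, |Hy z| ≤ B') :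
    ∫ z : ℂ, rexp (-Complex.normSq z) * (z.im * H z)
      = (1/2) * ∫ z : ℂ, rexp (-Complex.normSq z) * Hy z := by
  have hBnn : 0 ≤ B := (abs_nonneg _).trans (hB 0)
  have hB'nn : 0 ≤ B' := (abs_nonneg _).trans (hB' 0)
  have hint1 : Integrable (fun z : ℂ => rexp (-Complex.normSq z) * (z.im * H z)) := by
    refine integrable_dom ((continuous_gauss.mul ((Complex.continuous_im.mul hH))).aestronglyMeasurable)
      B B (fun z => ?_)
    rw [abs_mul, abs_of_nonneg (Real.exp_pos _).le, abs_mul, mul_comm]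
    refine mul_le_mul_of_nonneg_right ?_ (Real.exp_pos _).le
    have h1 : |z.im| ≤ 1 + Complex.normSq z :=
      (Complex.abs_im_le_norm z).trans (abs_le_one_add_normSq z)
    calc |z.im| * |H z| ≤ (1 + Complex.normSq z) * B := by
          have := Complex.normSq_nonneg z
          have := abs_nonneg z.im
          nlinarith [hB z, abs_nonneg (H z)]
    _ = B + B * Complex.normSq z := by ring
  have hint2 : Integrable (fun z : ℂ => rexp (-Complex.normSq z) * Hy z) := by
    refine integrable_dom ((continuous_gauss.mul hHy).aestronglyMeasurable) B' 0 (fun z => ?_)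
    rw [abs_mul, abs_of_nonneg (Real.exp_pos _).le, mul_comm]
    refine mul_le_mul_of_nonneg_right ?_ (Real.exp_pos _).le
    simpa using hB' z
  rw [integral_c_eq_iterated_y _ hint1, integral_c_eq_iterated_y _ hint2]
  rw [← integral_const_mul]
  congr 1
  funext x
  have hl : ∀ y : ℝ, rexp (-Complex.normSq (⟨x, y⟩ : ℂ)) * ((⟨x, y⟩ : ℂ).im * H ⟨x, y⟩)
      = rexp (-x^2) * (y * rexp (-y^2) * H ⟨x, y⟩) := by
    intro y
    rw [Complex.normSq_mk]
    show rexp (-(x*x + y*y)) * (y * H ⟨x, y⟩) = _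
    rw [show -(x*x+y*y) = -y^2 + -x^2 by ring, Real.exp_add]
    ring
  have hr : ∀ y : ℝ, rexp (-Complex.normSq (⟨x, y⟩ : ℂ)) * Hy ⟨x, y⟩
      = rexp (-x^2) * (rexp (-y^2) * Hy ⟨x, y⟩) := by
    intro y
    rw [Complex.normSq_mk, show -(x*x+y*y) = -y^2 + -x^2 by ring, Real.exp_add]
    ring
  calc ∫ y : ℝ, rexp (-Complex.normSq (⟨x, y⟩ : ℂ)) * ((⟨x, y⟩ : ℂ).im * H ⟨x, y⟩)
      = rexp (-x^2) * ∫ y : ℝ, y * rexp (-y^2) * H ⟨x, y⟩ := by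
        rw [← integral_const_mul]; congr 1; funext y; rw [hl y]
  _ = rexp (-x^2) * ((1/2) * ∫ y : ℝ, rexp (-y^2) * Hy ⟨x, y⟩) := by
        congr 1
        exact ibp_1d (fun y => H ⟨x, y⟩) (fun y => Hy ⟨x, y⟩) (hd x)
          (hH.comp (continuous_mk_y x)) (hHy.comp (continuous_mk_y x))
          B B' (fun y => hB _) (fun y => hB' _)
  _ = (1/2) * ∫ y : ℝ, rexp (-Complex.normSq (⟨x, y⟩ : ℂ)) * Hy ⟨x, y⟩ := by
        simp only [hr]
        rw [integral_const_mul]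
        ring

/-! ### The conditional-mean components and their partial derivatives -/

/-- real part moment sum. -/
def Prf (A : Finset ℂ) (a : ℂ) (t : ℝ) (z : ℂ) : ℂ :=
  ∑ a' ∈ A, ((a'.re : ℝ) : ℂ) * a' * ((Ef t (a - a') z : ℝ) : ℂ)

/-- imaginary part moment sum. -/
def Pif (A : Finset ℂ) (a : ℂ) (t : ℝ) (z : ℂ) : ℂ :=
  ∑ a' ∈ A, ((a'.im : ℝ) : ℂ) * a' * ((Ef t (a - a') z : ℝ) : ℂ)

/-- second moment sum. -/
def Uf (A : Finset ℂ) (a : ℂ) (t : ℝ) (z : ℂ) : ℝ :=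
  ∑ a' ∈ A, Complex.normSq a' * Ef t (a - a') z

def estR (A : Finset ℂ) (a : ℂ) (t : ℝ) (z : ℂ) : ℝ := (Nf A a t z).re / Df A a t z
def estI (A : Finset ℂ) (a : ℂ) (t : ℝ) (z : ℂ) : ℝ := (Nf A a t z).im / Df A a t z

def estRx (A : Finset ℂ) (a : ℂ) (t : ℝ) (z : ℂ) : ℝ :=
  2*t*((Prf A a t z).re * Df A a t z - (Nf A a t z).re * (Nf A a t z).re) / (Df A a t z)^2

def estIy (A : Finset ℂ) (a : ℂ) (t : ℝ) (z : ℂ) : ℝ :=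
  2*t*((Pif A a t z).im * Df A a t z - (Nf A a t z).im * (Nf A a t z).im) / (Df A a t z)^2

lemma Nf_re_sum (A : Finset ℂ) (a : ℂ) (t : ℝ) (z : ℂ) :
    (Nf A a t z).re = ∑ a' ∈ A, a'.re * Ef t (a - a') z := by
  rw [Nf, Complex.re_sum]
  exact Finset.sum_congr rfl fun a' _ => by
    simp [Complex.mul_re, Complex.ofReal_re, Complex.ofReal_im]

lemma Nf_im_sum (A : Finset ℂ) (a : ℂ) (t : ℝ) (z : ℂ) :
    (Nf A a t z).im = ∑ a' ∈ A, a'.im * Ef t (a - a') z := by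
  rw [Nf, Complex.im_sum]
  exact Finset.sum_congr rfl fun a' _ => by
    simp [Complex.mul_im, Complex.ofReal_re, Complex.ofReal_im]

lemma Prf_re_sum (A : Finset ℂ) (a : ℂ) (t : ℝ) (z : ℂ) :
    (Prf A a t z).re = ∑ a' ∈ A, (a'.re * a'.re) * Ef t (a - a') z := by
  rw [Prf, Complex.re_sum]
  exact Finset.sum_congr rfl fun a' _ => by
    simp [Complex.mul_re, Complex.mul_im, Complex.ofReal_re, Complex.ofReal_im]

lemma Pif_im_sum (A : Finset ℂ) (a : ℂ) (t : ℝ) (z : ℂ) :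
    (Pif A a t z).im = ∑ a' ∈ A, (a'.im * a'.im) * Ef t (a - a') z := by
  rw [Pif, Complex.im_sum]
  exact Finset.sum_congr rfl fun a' _ => by
    simp [Complex.mul_re, Complex.mul_im, Complex.ofReal_re, Complex.ofReal_im]

/-- estimates -/
lemma abs_estR_le {A : Finset ℂ} (hA : A.Nonempty) {a : ℂ} {t : ℝ} {z : ℂ} {K : ℝ}
    (hK : ∀ x ∈ A, ‖x‖ ≤ K) : |estR A a t z| ≤ K := by
  rw [estR, Nf_re_sum]
  exact ratio_le hA (fun a' ha' => (Complex.abs_re_le_norm a').trans (hK a' ha'))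

lemma abs_estI_le {A : Finset ℂ} (hA : A.Nonempty) {a : ℂ} {t : ℝ} {z : ℂ} {K : ℝ}
    (hK : ∀ x ∈ A, ‖x‖ ≤ K) : |estI A a t z| ≤ K := by
  rw [estI, Nf_im_sum]
  exact ratio_le hA (fun a' ha' => (Complex.abs_im_le_norm a').trans (hK a' ha'))

lemma Uf_div_le {A : Finset ℂ} (hA : A.Nonempty) {a : ℂ} {t : ℝ} {z : ℂ} {K : ℝ} (hK0 : 0 ≤ K)
    (hK : ∀ x ∈ A, ‖x‖ ≤ K) : |Uf A a t z / Df A a t z| ≤ K^2 := by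
  rw [Uf]
  refine ratio_le hA (fun a' ha' => ?_)
  rw [abs_of_nonneg (Complex.normSq_nonneg a'), ← Complex.sq_norm]
  have := norm_nonneg a'
  nlinarith [hK a' ha']

lemma abs_estRx_le {A : Finset ℂ} (hA : A.Nonempty) {a : ℂ} {t : ℝ} {z : ℂ} {K : ℝ} (hK0 : 0 ≤ K)
    (ht : 0 ≤ t) (hK : ∀ x ∈ A, ‖x‖ ≤ K) : |estRx A a t z| ≤ 8*t*K^2 := by
  have hD := Df_pos (a := a) (t := t) (z := z) hA
  have h1 : estRx A a t z = 2*t*((Prf A a t z).re / Df A a t z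
      - (estR A a t z) * (estR A a t z)) := by
    rw [estRx, estR]
    field_simp
  have h2 : |(Prf A a t z).re / Df A a t z| ≤ K^2 := by
    rw [Prf_re_sum]
    refine ratio_le hA (fun a' ha' => ?_)
    have h3 := Complex.abs_re_le_norm a'
    have h4 := abs_nonneg a'.re
    have := hK a' ha'
    rw [abs_mul]
    nlinarith [abs_nonneg a'.re]
  have h5 : |estR A a t z * estR A a t z| ≤ K^2 := by
    rw [abs_mul]
    have := abs_estR_le hA (a := a) (t := t) (z := z) hK
    have := abs_nonneg (estR A a t z)
    nlinarith
  rw [h1]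
  calc |2*t*((Prf A a t z).re / Df A a t z - estR A a t z * estR A a t z)|
      = 2*t*|(Prf A a t z).re / Df A a t z - estR A a t z * estR A a t z| := by
        rw [abs_mul, abs_of_nonneg (by linarith : (0:ℝ) ≤ 2*t)]
  _ ≤ 2*t*(K^2 + K^2) := by
        have := (abs_sub _ _).trans (add_le_add h2 h5)
        nlinarith [abs_nonneg ((Prf A a t z).re / Df A a t z - estR A a t z * estR A a t z)]
  _ ≤ 8*t*K^2 := by nlinarith [sq_nonneg K]

lemma abs_estIy_le {A : Finset ℂ} (hA : A.Nonempty) {a : ℂ} {t : ℝ} {z : ℂ} {K : ℝ} (hK0 : 0 ≤ K)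
    (ht : 0 ≤ t) (hK : ∀ x ∈ A, ‖x‖ ≤ K) : |estIy A a t z| ≤ 8*t*K^2 := by
  have hD := Df_pos (a := a) (t := t) (z := z) hA
  have h1 : estIy A a t z = 2*t*((Pif A a t z).im / Df A a t z
      - (estI A a t z) * (estI A a t z)) := by
    rw [estIy, estI]
    field_simp
  have h2 : |(Pif A a t z).im / Df A a t z| ≤ K^2 := by
    rw [Pif_im_sum]
    refine ratio_le hA (fun a' ha' => ?_)
    have h3 := Complex.abs_im_le_norm a'
    have h4 := abs_nonneg a'.im
    have := hK a' ha'
    rw [abs_mul]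
    nlinarith [abs_nonneg a'.im]
  have h5 : |estI A a t z * estI A a t z| ≤ K^2 := by
    rw [abs_mul]
    have := abs_estI_le hA (a := a) (t := t) (z := z) hK
    have := abs_nonneg (estI A a t z)
    nlinarith
  rw [h1]
  calc |2*t*((Pif A a t z).im / Df A a t z - estI A a t z * estI A a t z)|
      = 2*t*|(Pif A a t z).im / Df A a t z - estI A a t z * estI A a t z| := by
        rw [abs_mul, abs_of_nonneg (by linarith : (0:ℝ) ≤ 2*t)]
  _ ≤ 2*t*(K^2 + K^2) := by
        have := (abs_sub _ _).trans (add_le_add h2 h5)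
        nlinarith [abs_nonneg ((Pif A a t z).im / Df A a t z - estI A a t z * estI A a t z)]
  _ ≤ 8*t*K^2 := by nlinarith [sq_nonneg K]

/-- continuity -/
lemma continuous_Prf_z {A : Finset ℂ} {a : ℂ} {t : ℝ} : Continuous (fun z => Prf A a t z) :=
  continuous_finset_sum _ (fun _ _ =>
    continuous_const.mul (Complex.continuous_ofReal.comp continuous_Ef_z))

lemma continuous_Pif_z {A : Finset ℂ} {a : ℂ} {t : ℝ} : Continuous (fun z => Pif A a t z) :=
  continuous_finset_sum _ (fun _ _ =>
    continuous_const.mul (Complex.continuous_ofReal.comp continuous_Ef_z))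

lemma continuous_Uf_z {A : Finset ℂ} {a : ℂ} {t : ℝ} : Continuous (fun z => Uf A a t z) :=
  continuous_finset_sum _ (fun _ _ => continuous_const.mul continuous_Ef_z)

lemma continuous_estR {A : Finset ℂ} (hA : A.Nonempty) {a : ℂ} {t : ℝ} :
    Continuous (fun z => estR A a t z) :=
  (Complex.continuous_re.comp continuous_Nf_z).div continuous_Df_z (fun z => (Df_pos hA).ne')

lemma continuous_estI {A : Finset ℂ} (hA : A.Nonempty) {a : ℂ} {t : ℝ} :
    Continuous (fun z => estI A a t z) :=
  (Complex.continuous_im.comp continuous_Nf_z).div continuous_Df_z (fun z => (Df_pos hA).ne')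

lemma continuous_estRx {A : Finset ℂ} (hA : A.Nonempty) {a : ℂ} {t : ℝ} :
    Continuous (fun z => estRx A a t z) := by
  refine Continuous.div ?_ (continuous_Df_z.pow 2) (fun z => pow_ne_zero _ (Df_pos hA).ne')
  exact continuous_const.mul (((Complex.continuous_re.comp continuous_Prf_z).mul
    continuous_Df_z).sub ((Complex.continuous_re.comp continuous_Nf_z).mul
    (Complex.continuous_re.comp continuous_Nf_z)))

lemma continuous_estIy {A : Finset ℂ} (hA : A.Nonempty) {a : ℂ} {t : ℝ} :
    Continuous (fun z => estIy A a t z) := by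
  refine Continuous.div ?_ (continuous_Df_z.pow 2) (fun z => pow_ne_zero _ (Df_pos hA).ne')
  exact continuous_const.mul (((Complex.continuous_im.comp continuous_Pif_z).mul
    continuous_Df_z).sub ((Complex.continuous_im.comp continuous_Nf_z).mul
    (Complex.continuous_im.comp continuous_Nf_z)))

/-- partial derivative of `Ef` in the real direction of `z`. -/
lemma hasDerivAt_Ef_x (t : ℝ) (d : ℂ) (y x : ℝ) :
    HasDerivAt (fun x : ℝ => Ef t d ⟨x, y⟩) (-(2*(t*d.re + x)) * Ef t d ⟨x, y⟩) x := by
  have h : (fun x : ℝ => Ef t d ⟨x, y⟩)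
      = fun x : ℝ => rexp (-((t*d.re+x)^2 + (t*d.im+y)^2)) := by
    funext x
    rw [Ef, normSq_expand]
  rw [h]
  have h1 : HasDerivAt (fun x : ℝ => t*d.re+x) 1 x := (hasDerivAt_id x).const_add _
  have h2 := (((h1.fun_pow 2).add_const ((t*d.im+y)^2)).fun_neg).exp
  refine h2.congr_deriv (Eq.symm ?_)
  rw [Ef, normSq_expand]
  push_cast
  ring

/-- partial derivative of `Ef` in the imaginary direction of `z`. -/
lemma hasDerivAt_Ef_y (t : ℝ) (d : ℂ) (x y : ℝ) :
    HasDerivAt (fun y : ℝ => Ef t d ⟨x, y⟩) (-(2*(t*d.im + y)) * Ef t d ⟨x, y⟩) y := by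
  have h : (fun y : ℝ => Ef t d ⟨x, y⟩)
      = fun y : ℝ => rexp (-((t*d.re+x)^2 + (t*d.im+y)^2)) := by
    funext y
    rw [Ef, normSq_expand]
  rw [h]
  have h1 : HasDerivAt (fun y : ℝ => t*d.im+y) 1 y := (hasDerivAt_id y).const_add _
  have h2 := ((((h1.fun_pow 2).const_add ((t*d.re+x)^2))).fun_neg).exp
  refine h2.congr_deriv (Eq.symm ?_)
  rw [Ef, normSq_expand]
  push_cast
  ring

/-- partial derivative of `estR` in the `x` direction. -/
lemma hasDerivAt_estR_x {A : Finset ℂ} (hA : A.Nonempty) (a : ℂ) (t : ℝ) (y x : ℝ) :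
    HasDerivAt (fun x : ℝ => estR A a t ⟨x, y⟩) (estRx A a t ⟨x, y⟩) x := by
  have hnum : HasDerivAt (fun x : ℝ => (Nf A a t ⟨x, y⟩).re)
      (∑ a' ∈ A, a'.re * (-(2*(t*(a-a').re + x)) * Ef t (a-a') ⟨x, y⟩)) x := by
    have h : (fun x : ℝ => (Nf A a t ⟨x, y⟩).re)
        = fun x : ℝ => ∑ a' ∈ A, a'.re * Ef t (a - a') ⟨x, y⟩ := by
      funext x; rw [Nf_re_sum]
    rw [h]
    exact HasDerivAt.fun_sum (fun a' _ => (hasDerivAt_Ef_x t (a-a') y x).const_mul _)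
  have hden : HasDerivAt (fun x : ℝ => Df A a t ⟨x, y⟩)
      (∑ a' ∈ A, -(2*(t*(a-a').re + x)) * Ef t (a-a') ⟨x, y⟩) x :=
    HasDerivAt.fun_sum (fun a' _ => hasDerivAt_Ef_x t (a-a') y x)
  have hne : Df A a t ⟨x, y⟩ ≠ 0 := (Df_pos hA).ne'
  have h := hnum.div hden hne
  -- now rewrite the value
  have SX1 : ∑ a' ∈ A, a'.re * (-(2*(t*(a-a').re + x)) * Ef t (a-a') ⟨x, y⟩)
      = -(2*(t*a.re+x)) * (Nf A a t ⟨x, y⟩).re + 2*t*(Prf A a t ⟨x, y⟩).re := by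
    rw [Nf_re_sum, Prf_re_sum, Finset.mul_sum, Finset.mul_sum, ← Finset.sum_add_distrib]
    exact Finset.sum_congr rfl fun a' _ => by
      simp only [Complex.sub_re]
      ring
  have SX2 : ∑ a' ∈ A, -(2*(t*(a-a').re + x)) * Ef t (a-a') ⟨x, y⟩
      = -(2*(t*a.re+x)) * Df A a t ⟨x, y⟩ + 2*t*(Nf A a t ⟨x, y⟩).re := by
    rw [Nf_re_sum, Df, Finset.mul_sum, Finset.mul_sum, ← Finset.sum_add_distrib]
    exact Finset.sum_congr rfl fun a' _ => by
      simp only [Complex.sub_re]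
      ring
  rw [SX1, SX2] at h
  refine h.congr_deriv (Eq.symm ?_)
  simp only [estRx]
  ring

/-- partial derivative of `estI` in the `y` direction. -/
lemma hasDerivAt_estI_y {A : Finset ℂ} (hA : A.Nonempty) (a : ℂ) (t : ℝ) (x y : ℝ) :
    HasDerivAt (fun y : ℝ => estI A a t ⟨x, y⟩) (estIy A a t ⟨x, y⟩) y := by
  have hnum : HasDerivAt (fun y : ℝ => (Nf A a t ⟨x, y⟩).im)
      (∑ a' ∈ A, a'.im * (-(2*(t*(a-a').im + y)) * Ef t (a-a') ⟨x, y⟩)) y := by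
    have h : (fun y : ℝ => (Nf A a t ⟨x, y⟩).im)
        = fun y : ℝ => ∑ a' ∈ A, a'.im * Ef t (a - a') ⟨x, y⟩ := by
      funext y; rw [Nf_im_sum]
    rw [h]
    exact HasDerivAt.fun_sum (fun a' _ => (hasDerivAt_Ef_y t (a-a') x y).const_mul _)
  have hden : HasDerivAt (fun y : ℝ => Df A a t ⟨x, y⟩)
      (∑ a' ∈ A, -(2*(t*(a-a').im + y)) * Ef t (a-a') ⟨x, y⟩) y :=
    HasDerivAt.fun_sum (fun a' _ => hasDerivAt_Ef_y t (a-a') x y)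
  have hne : Df A a t ⟨x, y⟩ ≠ 0 := (Df_pos hA).ne'
  have h := hnum.div hden hne
  have SY1 : ∑ a' ∈ A, a'.im * (-(2*(t*(a-a').im + y)) * Ef t (a-a') ⟨x, y⟩)
      = -(2*(t*a.im+y)) * (Nf A a t ⟨x, y⟩).im + 2*t*(Pif A a t ⟨x, y⟩).im := by
    rw [Nf_im_sum, Pif_im_sum, Finset.mul_sum, Finset.mul_sum, ← Finset.sum_add_distrib]
    exact Finset.sum_congr rfl fun a' _ => by
      simp only [Complex.sub_im]
      ring
  have SY2 : ∑ a' ∈ A, -(2*(t*(a-a').im + y)) * Ef t (a-a') ⟨x, y⟩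
      = -(2*(t*a.im+y)) * Df A a t ⟨x, y⟩ + 2*t*(Nf A a t ⟨x, y⟩).im := by
    rw [Nf_im_sum, Df, Finset.mul_sum, Finset.mul_sum, ← Finset.sum_add_distrib]
    exact Finset.sum_congr rfl fun a' _ => by
      simp only [Complex.sub_im]
      ring
  rw [SY1, SY2] at h
  refine h.congr_deriv (Eq.symm ?_)
  simp only [estIy]
  ring

/-! ### The key per-point identity -/

lemma PU_sum (A : Finset ℂ) (a : ℂ) (t : ℝ) (z : ℂ) :
    (Prf A a t z).re + (Pif A a t z).im = Uf A a t z := by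
  rw [Prf_re_sum, Pif_im_sum, Uf, ← Finset.sum_add_distrib]
  exact Finset.sum_congr rfl fun a' _ => by
    simp only [Complex.normSq_apply]
    ring

lemma dft_decomp (A : Finset ℂ) (a : ℂ) (t : ℝ) (z : ℂ) :
    Dft A a t z = (-(2*t)*Complex.normSq a - 2*(a.re*z.re + a.im*z.im)) * Df A a t z
      + (4*t*a.re + 2*z.re) * (Nf A a t z).re + (4*t*a.im + 2*z.im) * (Nf A a t z).im
      + (-(2*t)) * Uf A a t z := by
  have t1 : ∀ a' ∈ A, -(dq t (a-a') z) * Ef t (a-a') z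
      = (-(2*t)*Complex.normSq a - 2*(a.re*z.re + a.im*z.im)) * Ef t (a-a') z
        + (4*t*a.re + 2*z.re) * (a'.re * Ef t (a-a') z)
        + (4*t*a.im + 2*z.im) * (a'.im * Ef t (a-a') z)
        + (-(2*t)) * (Complex.normSq a' * Ef t (a-a') z) := by
    intro a' _
    simp only [dq, Complex.sub_re, Complex.sub_im, Complex.normSq_apply]
    ring
  rw [Dft, Finset.sum_congr rfl t1, Finset.sum_add_distrib, Finset.sum_add_distrib,
    Finset.sum_add_distrib, ← Finset.mul_sum, ← Finset.mul_sum, ← Finset.mul_sum,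
    ← Finset.mul_sum, ← Df, ← Nf_re_sum, ← Nf_im_sum, ← Uf]

lemma normSq_a_sub_est (A : Finset ℂ) (hA : A.Nonempty) (a : ℂ) (t : ℝ) (z : ℂ) :
    Complex.normSq (a - Nf A a t z / ((Df A a t z : ℝ) : ℂ))
      = Complex.normSq a
        - 2*(a.re * estR A a t z + a.im * estI A a t z)
        + Complex.normSq (Nf A a t z) / (Df A a t z)^2 := by
  have hD := Df_pos (a := a) (t := t) (z := z) hA
  rw [Complex.normSq_sub, map_div₀]
  simp only [Complex.mul_re, Complex.conj_re, Complex.conj_im, Complex.div_ofReal_re,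
    Complex.div_ofReal_im, Complex.normSq_ofReal, estR, estI]
  field_simp
  ring

/-- the per-point identity obtained from Gaussian integration by parts. -/
lemma I1 {A : Finset ℂ} (hA : A.Nonempty) (a : ℂ) {K : ℝ} (hK : ∀ x ∈ A, ‖x‖ ≤ K)
    (hKa : ‖a‖ ≤ K) {t : ℝ} (ht : 0 < t) :
    ∫ z : ℂ, rexp (-Complex.normSq z) * (Dft A a t z / Df A a t z)
      = (-(2*t)) * ∫ z : ℂ, rexp (-Complex.normSq z)
          * Complex.normSq (a - Nf A a t z / ((Df A a t z : ℝ) : ℂ)) := by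
  have hK0 : 0 ≤ K := (norm_nonneg a).trans hKa
  have hare : |a.re| ≤ K := (Complex.abs_re_le_norm a).trans hKa
  have haim : |a.im| ≤ K := (Complex.abs_im_le_norm a).trans hKa
  have hnsa : Complex.normSq a ≤ K^2 := by
    rw [← Complex.sq_norm]
    nlinarith [norm_nonneg a]
  set f1 : ℂ → ℝ := fun z => rexp (-Complex.normSq z) *
    ((-(2*t))*(Complex.normSq a - 2*(a.re * estR A a t z + a.im * estI A a t z)
      + Uf A a t z / Df A a t z)) with hf1
  set f2 : ℂ → ℝ := fun z => rexp (-Complex.normSq z) *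
    (2*(z.re * (estR A a t z - a.re) + z.im * (estI A a t z - a.im))) with hf2
  -- pointwise decomposition
  have alg1 : ∀ z : ℂ, rexp (-Complex.normSq z) * (Dft A a t z / Df A a t z)
      = f1 z + f2 z := by
    intro z
    have hD := Df_pos (a := a) (t := t) (z := z) hA
    rw [hf1, hf2, dft_decomp]
    simp only [estR, estI]
    field_simp
    ring
  -- bounds for components
  have hbR : ∀ z, |estR A a t z| ≤ K := fun z => abs_estR_le hA hK
  have hbI : ∀ z, |estI A a t z| ≤ K := fun z => abs_estI_le hA hK
  have hbU : ∀ z, |Uf A a t z / Df A a t z| ≤ K^2 := fun z => Uf_div_le hA hK0 hK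
  have hbRx : ∀ z, |estRx A a t z| ≤ 8*t*K^2 := fun z => abs_estRx_le hA hK0 ht.le hK
  have hbIy : ∀ z, |estIy A a t z| ≤ 8*t*K^2 := fun z => abs_estIy_le hA hK0 ht.le hK
  -- integrability of the pieces
  have int_f1 : Integrable f1 := by
    refine integrable_dom ?_ (2*t*6*K^2) 0 (fun z => ?_)
    · exact (continuous_gauss.mul (continuous_const.mul
        (((continuous_const.sub (continuous_const.mul
          ((continuous_const.mul (continuous_estR hA)).add
           (continuous_const.mul (continuous_estI hA))))).add
          (continuous_Uf_z.div continuous_Df_z (fun z => (Df_pos hA).ne')))))).aestronglyMeasurable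
    · rw [hf1, abs_mul, abs_of_nonneg (Real.exp_pos _).le, mul_comm]
      refine mul_le_mul_of_nonneg_right ?_ (Real.exp_pos _).le
      have h1 := hbR z; have h2 := hbI z; have h3 := hbU z
      have h4 : |Complex.normSq a - 2*(a.re * estR A a t z + a.im * estI A a t z)
          + Uf A a t z / Df A a t z| ≤ 6*K^2 := by
        have h5 := abs_le.1 h1; have h6 := abs_le.1 h2; have h7 := abs_le.1 h3
        have h8 := abs_le.1 hare; have h9 := abs_le.1 haim
        rw [abs_le]
        constructor <;> nlinarith [Complex.normSq_nonneg a, sq_nonneg K]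
      rw [abs_mul, abs_neg, abs_of_nonneg (by linarith : (0:ℝ) ≤ 2*t)]
      nlinarith [abs_nonneg (Complex.normSq a - 2*(a.re * estR A a t z + a.im * estI A a t z)
          + Uf A a t z / Df A a t z)]
  have int_g1 : Integrable (fun z : ℂ => rexp (-Complex.normSq z)
      * (z.re * (estR A a t z - a.re))) := by
    refine integrable_dom ?_ (2*K) (2*K) (fun z => ?_)
    · exact (continuous_gauss.mul (Complex.continuous_re.mul
        ((continuous_estR hA).sub continuous_const))).aestronglyMeasurable
    · rw [abs_mul, abs_of_nonneg (Real.exp_pos _).le, mul_comm]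
      refine mul_le_mul_of_nonneg_right ?_ (Real.exp_pos _).le
      rw [abs_mul]
      have h1 : |estR A a t z - a.re| ≤ 2*K := by
        have := abs_le.1 (hbR z); have := abs_le.1 hare
        rw [abs_le]; constructor <;> linarith
      have h2 : |z.re| ≤ 1 + Complex.normSq z :=
        (Complex.abs_re_le_norm z).trans (abs_le_one_add_normSq z)
      have := abs_nonneg z.re
      have := Complex.normSq_nonneg z
      nlinarith [abs_nonneg (estR A a t z - a.re)]
  have int_g2 : Integrable (fun z : ℂ => rexp (-Complex.normSq z)
      * (z.im * (estI A a t z - a.im))) := by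
    refine integrable_dom ?_ (2*K) (2*K) (fun z => ?_)
    · exact (continuous_gauss.mul (Complex.continuous_im.mul
        ((continuous_estI hA).sub continuous_const))).aestronglyMeasurable
    · rw [abs_mul, abs_of_nonneg (Real.exp_pos _).le, mul_comm]
      refine mul_le_mul_of_nonneg_right ?_ (Real.exp_pos _).le
      rw [abs_mul]
      have h1 : |estI A a t z - a.im| ≤ 2*K := by
        have := abs_le.1 (hbI z); have := abs_le.1 haim
        rw [abs_le]; constructor <;> linarith
      have h2 : |z.im| ≤ 1 + Complex.normSq z :=
        (Complex.abs_im_le_norm z).trans (abs_le_one_add_normSq z)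
      have := abs_nonneg z.im
      have := Complex.normSq_nonneg z
      nlinarith [abs_nonneg (estI A a t z - a.im)]
  have int_f2 : Integrable f2 := by
    have : f2 = fun z => 2 * (rexp (-Complex.normSq z) * (z.re * (estR A a t z - a.re))
        + rexp (-Complex.normSq z) * (z.im * (estI A a t z - a.im))) := by
      funext z; rw [hf2]; ring
    rw [this]
    exact ((int_g1.add int_g2).const_mul 2)
  have int_eRx : Integrable (fun z : ℂ => rexp (-Complex.normSq z) * estRx A a t z) := by
    refine integrable_dom ((continuous_gauss.mul (continuous_estRx hA)).aestronglyMeasurable)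
      (8*t*K^2) 0 (fun z => ?_)
    rw [abs_mul, abs_of_nonneg (Real.exp_pos _).le, mul_comm]
    refine mul_le_mul_of_nonneg_right ?_ (Real.exp_pos _).le
    simpa using hbRx z
  have int_eIy : Integrable (fun z : ℂ => rexp (-Complex.normSq z) * estIy A a t z) := by
    refine integrable_dom ((continuous_gauss.mul (continuous_estIy hA)).aestronglyMeasurable)
      (8*t*K^2) 0 (fun z => ?_)
    rw [abs_mul, abs_of_nonneg (Real.exp_pos _).le, mul_comm]
    refine mul_le_mul_of_nonneg_right ?_ (Real.exp_pos _).le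
    simpa using hbIy z
  -- IBP on the two middle terms
  have hib1 : ∫ z : ℂ, rexp (-Complex.normSq z) * (z.re * (estR A a t z - a.re))
      = (1/2) * ∫ z : ℂ, rexp (-Complex.normSq z) * estRx A a t z := by
    refine ibp_x (fun z => estR A a t z - a.re) (fun z => estRx A a t z)
      ((continuous_estR hA).sub continuous_const) (continuous_estRx hA)
      (fun y x => (hasDerivAt_estR_x hA a t y x).sub_const a.re)
      (2*K) (8*t*K^2) (fun z => ?_) hbRx
    show |estR A a t z - a.re| ≤ 2*K
    have := abs_le.1 (hbR z); have := abs_le.1 hare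
    rw [abs_le]; constructor <;> linarith
  have hib2 : ∫ z : ℂ, rexp (-Complex.normSq z) * (z.im * (estI A a t z - a.im))
      = (1/2) * ∫ z : ℂ, rexp (-Complex.normSq z) * estIy A a t z := by
    refine ibp_y (fun z => estI A a t z - a.im) (fun z => estIy A a t z)
      ((continuous_estI hA).sub continuous_const) (continuous_estIy hA)
      (fun x y => (hasDerivAt_estI_y hA a t x y).sub_const a.im)
      (2*K) (8*t*K^2) (fun z => ?_) hbIy
    show |estI A a t z - a.im| ≤ 2*K
    have := abs_le.1 (hbI z); have := abs_le.1 haim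
    rw [abs_le]; constructor <;> linarith
  -- assemble
  have e1 : (fun z : ℂ => rexp (-Complex.normSq z) * (Dft A a t z / Df A a t z))
      = fun z => f1 z + f2 z := funext alg1
  rw [e1, integral_add int_f1 int_f2]
  have e2 : ∫ z : ℂ, f2 z = ∫ z : ℂ, rexp (-Complex.normSq z) * estRx A a t z
      + rexp (-Complex.normSq z) * estIy A a t z := by
    have e3 : f2 = fun z => 2 * (rexp (-Complex.normSq z) * (z.re * (estR A a t z - a.re))
        + rexp (-Complex.normSq z) * (z.im * (estI A a t z - a.im))) := by
      funext z; rw [hf2]; ring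
    rw [e3, integral_const_mul, integral_add int_g1 int_g2, hib1, hib2,
      integral_add int_eRx int_eIy]
    ring
  rw [e2]
  have int_sum : Integrable (fun z : ℂ => rexp (-Complex.normSq z) * estRx A a t z
      + rexp (-Complex.normSq z) * estIy A a t z) := int_eRx.add int_eIy
  rw [← integral_add int_f1 int_sum]
  -- final pointwise identity
  have P3 : ∀ z : ℂ, f1 z + (rexp (-Complex.normSq z) * estRx A a t z
        + rexp (-Complex.normSq z) * estIy A a t z)
      = (-(2*t)) * (rexp (-Complex.normSq z)
          * Complex.normSq (a - Nf A a t z / ((Df A a t z : ℝ) : ℂ))) := by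
    intro z
    have hD := Df_pos (a := a) (t := t) (z := z) hA
    have hsum : estRx A a t z + estIy A a t z
        = 2*t*(Uf A a t z / Df A a t z
            - Complex.normSq (Nf A a t z) / (Df A a t z)^2) := by
      rw [estRx, estIy]
      have hPU := PU_sum A a t z
      rw [Complex.normSq_apply]
      field_simp
      first
      | linear_combination 2*t*(Df A a t z)^4*hPU
      | linear_combination (-(2*t)*(Df A a t z)^4)*hPU
      | linear_combination 2*t*(Df A a t z)^3*hPU
      | linear_combination (-(2*t)*(Df A a t z)^3)*hPU
      | linear_combination (Df A a t z)*hPU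
    rw [hf1, normSq_a_sub_est A hA a t z]
    have : rexp (-Complex.normSq z) * estRx A a t z
        + rexp (-Complex.normSq z) * estIy A a t z
        = rexp (-Complex.normSq z) * (estRx A a t z + estIy A a t z) := by ring
    rw [this, hsum]
    ring
  rw [show (fun z : ℂ => f1 z + (rexp (-Complex.normSq z) * estRx A a t z
        + rexp (-Complex.normSq z) * estIy A a t z))
      = fun z => (-(2*t)) * (rexp (-Complex.normSq z)
          * Complex.normSq (a - Nf A a t z / ((Df A a t z : ℝ) : ℂ))) from funext P3]
  rw [integral_const_mul]

/-! ### Symmetrization via translation invariance -/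

lemma Ef_arg_shift (t : ℝ) (a a' z : ℂ) : Ef t (0-a') (z + (t:ℂ)*a) = Ef t (a-a') z := by
  rw [Ef, Ef]
  have h : (t:ℂ)*(0-a') + (z + (t:ℂ)*a) = (t:ℂ)*(a-a') + z := by ring
  rw [h]

lemma Ef_eq_shift (t : ℝ) (c z : ℂ) : Ef t (0-c) z = rexp (-Complex.normSq (z - (t:ℂ)*c)) := by
  rw [Ef]
  have h : (t:ℂ)*(0-c) + z = z - (t:ℂ)*c := by ring
  rw [h]

lemma Nf_shift (A : Finset ℂ) (t : ℝ) (a z : ℂ) :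
    Nf A 0 t (z + (t:ℂ)*a) = Nf A a t z := by
  rw [Nf, Nf]
  exact Finset.sum_congr rfl fun a' _ => by rw [Ef_arg_shift]

lemma Df_shift (A : Finset ℂ) (t : ℝ) (a z : ℂ) :
    Df A 0 t (z + (t:ℂ)*a) = Df A a t z := by
  rw [Df, Df]
  exact Finset.sum_congr rfl fun a' _ => by rw [Ef_arg_shift]

lemma integrable_gauss_shift (c : ℂ) :
    Integrable (fun z : ℂ => rexp (-Complex.normSq (z - c))) := by
  have h := (integrable_gauss_c one_pos).comp_sub_right c
  simpa using h

lemma integrable_Ef_mul_bounded {t : ℝ} (c : ℂ) {g : ℂ → ℝ}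
    (hg : AEStronglyMeasurable g volume) {B : ℝ}
    (hB : ∀ y, |g y| ≤ B) : Integrable (fun y : ℂ => Ef t (0-c) y * g y) := by
  refine ((integrable_gauss_shift ((t:ℂ)*c)).const_mul B).mono'
    ((continuous_Ef_z.aestronglyMeasurable).mul hg) ?_
  filter_upwards with y
  rw [Real.norm_eq_abs, abs_mul, abs_of_nonneg (Ef_pos).le, Ef_eq_shift]
  have h1 := hB y
  have h2 := (Real.exp_pos (-Complex.normSq (y - (t:ℂ)*c))).le
  have h3 : 0 ≤ B := (abs_nonneg _).trans (hB 0)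
  calc rexp (-Complex.normSq (y - (t:ℂ)*c)) * |g y|
      ≤ rexp (-Complex.normSq (y - (t:ℂ)*c)) * B :=
        mul_le_mul_of_nonneg_left h1 h2
  _ = B * rexp (-Complex.normSq (y - (t:ℂ)*c)) := by ring

/-- symmetrization: the cross-term equals the second moment of the estimate. -/
lemma sym {A : Finset ℂ} (hA : A.Nonempty) {K : ℝ} (hK : ∀ x ∈ A, ‖x‖ ≤ K) (t : ℝ) :
    ∑ a ∈ A, ∫ z : ℂ, rexp (-Complex.normSq z)
        * (a * (starRingEnd ℂ) (Nf A a t z / ((Df A a t z : ℝ) : ℂ))).re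
      = ∑ a ∈ A, ∫ z : ℂ, rexp (-Complex.normSq z)
          * Complex.normSq (Nf A a t z / ((Df A a t z : ℝ) : ℂ)) := by
  obtain ⟨a₀, ha₀⟩ := id hA
  have hK0 : 0 ≤ K := (norm_nonneg a₀).trans (hK a₀ ha₀)
  set G : ℂ → ℂ := fun y => Nf A 0 t y / ((Df A 0 t y : ℝ) : ℂ) with hG
  have hGb : ∀ y, ‖(G y)‖ ≤ K := fun y => abs_est_le hA hK
  have hGcont : Continuous G :=
    continuous_Nf_z.div (Complex.continuous_ofReal.comp continuous_Df_z)
      (fun y => by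
        simp only [ne_eq, Complex.ofReal_eq_zero]
        exact (Df_pos hA).ne')
  -- step 1: translate the left side
  have step1 : ∀ a ∈ A, (∫ z : ℂ, rexp (-Complex.normSq z)
      * (a * (starRingEnd ℂ) (Nf A a t z / ((Df A a t z : ℝ) : ℂ))).re)
      = ∫ y : ℂ, Ef t (0-a) y * (a * (starRingEnd ℂ) (G y)).re := by
    intro a _
    rw [← integral_add_right_eq_self
      (fun y : ℂ => Ef t (0-a) y * (a * (starRingEnd ℂ) (G y)).re) ((t:ℂ)*a)]
    congr 1
    funext z
    rw [hG]
    simp only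
    rw [Nf_shift, Df_shift, Ef_eq_shift]
    have h : z + (t:ℂ)*a - (t:ℂ)*a = z := by ring
    rw [h]
  have step2 : ∀ a ∈ A, (∫ z : ℂ, rexp (-Complex.normSq z)
      * Complex.normSq (Nf A a t z / ((Df A a t z : ℝ) : ℂ)))
      = ∫ y : ℂ, Ef t (0-a) y * Complex.normSq (G y) := by
    intro a _
    rw [← integral_add_right_eq_self
      (fun y : ℂ => Ef t (0-a) y * Complex.normSq (G y)) ((t:ℂ)*a)]
    congr 1
    funext z
    rw [hG]
    simp only
    rw [Nf_shift, Df_shift, Ef_eq_shift]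
    have h : z + (t:ℂ)*a - (t:ℂ)*a = z := by ring
    rw [h]
  rw [Finset.sum_congr rfl step1, Finset.sum_congr rfl step2]
  -- step 2: exchange sum and integral
  have int1 : ∀ a ∈ A, Integrable (fun y : ℂ => Ef t (0-a) y
      * (a * (starRingEnd ℂ) (G y)).re) := by
    intro a ha
    refine integrable_Ef_mul_bounded a
      ((Complex.continuous_re.comp (continuous_const.mul (Complex.continuous_conj.comp
        hGcont))).aestronglyMeasurable) (B := K*K) (fun y => ?_)
    calc |(a * (starRingEnd ℂ) (G y)).re| ≤ ‖(a * (starRingEnd ℂ) (G y))‖ :=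
          Complex.abs_re_le_norm _
    _ = ‖a‖ * ‖(G y)‖ := by rw [norm_mul, Complex.norm_conj]
    _ ≤ K*K := by
        have := norm_nonneg a
        have := norm_nonneg (G y)
        nlinarith [hK a ha, hGb y]
  have int2 : ∀ a ∈ A, Integrable (fun y : ℂ => Ef t (0-a) y * Complex.normSq (G y)) := by
    intro a _
    refine integrable_Ef_mul_bounded a
      ((Complex.continuous_normSq.comp hGcont).aestronglyMeasurable) (B := K*K) (fun y => ?_)
    rw [abs_of_nonneg (Complex.normSq_nonneg _), ← Complex.sq_norm]
    nlinarith [hGb y, norm_nonneg (G y)]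
  rw [← integral_finset_sum A int1, ← integral_finset_sum A int2]
  -- step 3: pointwise identity
  congr 1
  funext y
  have hD := Df_pos (A := A) (a := 0) (t := t) (z := y) hA
  have l1 : ∑ a ∈ A, Ef t (0-a) y * (a * (starRingEnd ℂ) (G y)).re
      = (Nf A 0 t y * (starRingEnd ℂ) (G y)).re := by
    rw [Nf, Finset.sum_mul, Complex.re_sum]
    exact Finset.sum_congr rfl fun a _ => by
      have h : a * ((Ef t (0-a) y : ℝ) : ℂ) * (starRingEnd ℂ) (G y)
          = (a * (starRingEnd ℂ) (G y)) * ((Ef t (0-a) y : ℝ) : ℂ) := by ring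
      rw [h, Complex.mul_re]
      simp [Complex.ofReal_re, Complex.ofReal_im]
      ring
  have l2 : ∑ a ∈ A, Ef t (0-a) y * Complex.normSq (G y)
      = Df A 0 t y * Complex.normSq (G y) := by
    rw [Df, Finset.sum_mul]
  rw [l1, l2, hG]
  simp only
  rw [map_div₀, Complex.conj_ofReal]
  have hne : ((Df A 0 t y : ℝ) : ℂ) ≠ 0 := by
    simp only [ne_eq, Complex.ofReal_eq_zero]
    exact hD.ne'
  have l3 : Nf A 0 t y * ((starRingEnd ℂ) (Nf A 0 t y) / ((Df A 0 t y : ℝ) : ℂ))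
      = ((Complex.normSq (Nf A 0 t y) : ℝ) : ℂ) / ((Df A 0 t y : ℝ) : ℂ) := by
    rw [mul_div_assoc']
    congr 1
    rw [Complex.mul_conj]
  rw [l3]
  rw [Complex.div_ofReal_re, Complex.ofReal_re]
  rw [map_div₀, Complex.normSq_ofReal]
  field_simp

/-! ### Assembling the I-MMSE relation (in the amplitude parameter) -/

lemma integrable_gauss1 : Integrable (fun z : ℂ => rexp (-Complex.normSq z)) := by
  have h := integrable_gauss_c one_pos
  simpa using h

lemma integrable_gauss_logDf (A : Finset ℂ) (hA : A.Nonempty) (a : ℂ) {K : ℝ}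
    (hK : ∀ x ∈ A, ‖x‖ ≤ K) (hKa : ‖a‖ ≤ K) (t : ℝ) :
    Integrable (fun z : ℂ => rexp (-Complex.normSq z) * Real.log (Df A a t z)) := by
  refine integrable_dom ((continuous_gauss.mul (continuous_logDf_z hA)).aestronglyMeasurable)
    (Real.log A.card + 8*t^2*K^2) 2 (fun z => ?_)
  obtain ⟨a₀, ha₀⟩ := id hA
  have hK0 : 0 ≤ K := (norm_nonneg a).trans hKa
  have hpos := Df_pos (A := A) (a := a) (t := t) (z := z) hA
  have hub : Real.log (Df A a t z) ≤ Real.log A.card :=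
    Real.log_le_log hpos Df_le_card
  have hlb : -(Real.log (Df A a t z)) ≤ 8*t^2*K^2 + 2*Complex.normSq z := by
    have h1 : Ef t (a - a₀) z ≤ Df A a t z :=
      Finset.single_le_sum (fun x _ => (Ef_pos (t := t) (d := a - x) (z := z)).le) ha₀
    have h2 : Real.log (Ef t (a - a₀) z) ≤ Real.log (Df A a t z) :=
      Real.log_le_log Ef_pos h1
    rw [Ef, Real.log_exp] at h2
    have h3 : Complex.normSq ((t:ℂ)*(a - a₀) + z) ≤ 8*t^2*K^2 + 2*Complex.normSq z := by
      have h4 : ‖((t:ℂ)*(a - a₀) + z)‖ ≤ ‖((t:ℂ)*(a - a₀))‖ + ‖z‖ :=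
        norm_add_le _ _
      have h5 : ‖((t:ℂ)*(a-a₀))‖ = |t| * ‖(a - a₀)‖ := by
        rw [norm_mul, Complex.norm_real, Real.norm_eq_abs]
      have h6 : ‖(a - a₀)‖ ≤ 2*K := abs_sub_le_two hK hKa ha₀
      have h7 := Complex.sq_norm ((t:ℂ)*(a - a₀) + z)
      have h8 := Complex.sq_norm z
      have hXY : ‖((t:ℂ)*(a - a₀) + z)‖ ≤ |t| * ‖(a - a₀)‖ + ‖z‖ := by
        rw [← h5]; exact h4
      have h9 : Complex.normSq ((t:ℂ)*(a - a₀) + z)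
          ≤ (|t| * ‖(a - a₀)‖ + ‖z‖)^2 := by
        rw [← h7]
        exact pow_le_pow_left₀ (norm_nonneg _) hXY 2
      have h10 : (|t| * ‖(a - a₀)‖ + ‖z‖)^2
          ≤ 2*(|t| * ‖(a - a₀)‖)^2 + 2*(‖z‖)^2 := by
        nlinarith [sq_nonneg (|t| * ‖(a - a₀)‖ - ‖z‖)]
      have h11 : (|t| * ‖(a - a₀)‖)^2 ≤ t^2 * (4*K^2) := by
        have hD := norm_nonneg (a - a₀)
        have hD2 : (‖(a - a₀)‖)^2 ≤ 4*K^2 := by nlinarith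
        have heq : (|t| * ‖(a - a₀)‖)^2 = t^2 * (‖(a - a₀)‖)^2 := by
          rw [mul_pow, sq_abs]
        rw [heq]
        exact mul_le_mul_of_nonneg_left hD2 (sq_nonneg t)
      nlinarith
    linarith
  have hlog0 : (0:ℝ) ≤ Real.log A.card := by
    have : (1:ℝ) ≤ A.card := by
      have := Finset.card_pos.2 hA
      exact_mod_cast this
    exact Real.log_nonneg this
  rw [abs_mul, abs_of_nonneg (Real.exp_pos _).le, mul_comm]
  refine mul_le_mul_of_nonneg_right ?_ (Real.exp_pos _).le
  rw [abs_le]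
  constructor
  · have := Complex.normSq_nonneg z; nlinarith [sq_nonneg (t*K)]
  · have := Complex.normSq_nonneg z; nlinarith [sq_nonneg (t*K)]

lemma integrable_gauss_nsq_est {A : Finset ℂ} (hA : A.Nonempty) (a : ℂ) {K : ℝ}
    (hK : ∀ x ∈ A, ‖x‖ ≤ K) (t : ℝ) :
    Integrable (fun z : ℂ => rexp (-Complex.normSq z)
      * Complex.normSq (Nf A a t z / ((Df A a t z : ℝ) : ℂ))) := by
  have hcont : Continuous (fun z : ℂ => Nf A a t z / ((Df A a t z : ℝ) : ℂ)) :=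
    continuous_Nf_z.div (Complex.continuous_ofReal.comp continuous_Df_z)
      (fun z => by
        simp only [ne_eq, Complex.ofReal_eq_zero]
        exact (Df_pos hA).ne')
  refine integrable_dom ((continuous_gauss.mul
    (Complex.continuous_normSq.comp hcont)).aestronglyMeasurable) (K^2) 0 (fun z => ?_)
  rw [abs_mul, abs_of_nonneg (Real.exp_pos _).le, mul_comm]
  refine mul_le_mul_of_nonneg_right ?_ (Real.exp_pos _).le
  rw [abs_of_nonneg (Complex.normSq_nonneg _), ← Complex.sq_norm]
  have h1 := abs_est_le (a := a) (t := t) (z := z) hA hK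
  have h2 := norm_nonneg (Nf A a t z / ((Df A a t z : ℝ) : ℂ))
  nlinarith

lemma integrable_gauss_cross {A : Finset ℂ} (hA : A.Nonempty) (a : ℂ) {K : ℝ}
    (hK : ∀ x ∈ A, ‖x‖ ≤ K) (hKa : ‖a‖ ≤ K) (t : ℝ) :
    Integrable (fun z : ℂ => rexp (-Complex.normSq z)
      * (a * (starRingEnd ℂ) (Nf A a t z / ((Df A a t z : ℝ) : ℂ))).re) := by
  have hcont : Continuous (fun z : ℂ => Nf A a t z / ((Df A a t z : ℝ) : ℂ)) :=
    continuous_Nf_z.div (Complex.continuous_ofReal.comp continuous_Df_z)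
      (fun z => by
        simp only [ne_eq, Complex.ofReal_eq_zero]
        exact (Df_pos hA).ne')
  refine integrable_dom ((continuous_gauss.mul (Complex.continuous_re.comp
    (continuous_const.mul (Complex.continuous_conj.comp hcont)))).aestronglyMeasurable)
    (K^2) 0 (fun z => ?_)
  rw [abs_mul, abs_of_nonneg (Real.exp_pos _).le, mul_comm]
  refine mul_le_mul_of_nonneg_right ?_ (Real.exp_pos _).le
  calc |(a * (starRingEnd ℂ) (Nf A a t z / ((Df A a t z : ℝ) : ℂ))).re|
      ≤ ‖(a * (starRingEnd ℂ) (Nf A a t z / ((Df A a t z : ℝ) : ℂ)))‖ :=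
        Complex.abs_re_le_norm _
  _ = ‖a‖ * ‖(Nf A a t z / ((Df A a t z : ℝ) : ℂ))‖ := by
      rw [norm_mul, Complex.norm_conj]
  _ ≤ K^2 + 0 * Complex.normSq z := by
      have h1 := abs_est_le (a := a) (t := t) (z := z) hA hK
      have h2 := norm_nonneg (Nf A a t z / ((Df A a t z : ℝ) : ℂ))
      have h3 := norm_nonneg a
      nlinarith

/-- the summed derivative value, after IBP and symmetrization. -/
lemma sum_deriv_eq (A : Finset ℂ) (hA : A.Nonempty) {K : ℝ}
    (hK : ∀ x ∈ A, ‖x‖ ≤ K) {t : ℝ} (ht : 0 < t) :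
    ∑ a ∈ A, ∫ z : ℂ, rexp (-Complex.normSq z) * (Dft A a t z / Df A a t z)
      = (-(2*t)) * ∑ a ∈ A, (Complex.normSq a * π
          - ∫ z : ℂ, rexp (-Complex.normSq z)
              * Complex.normSq (Nf A a t z / ((Df A a t z : ℝ) : ℂ))) := by
  have h1 : ∀ a ∈ A, (∫ z : ℂ, rexp (-Complex.normSq z) * (Dft A a t z / Df A a t z))
      = (-(2*t)) * ∫ z : ℂ, rexp (-Complex.normSq z)
          * Complex.normSq (a - Nf A a t z / ((Df A a t z : ℝ) : ℂ)) :=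
    fun a ha => I1 hA a hK (hK a ha) ht
  rw [Finset.sum_congr rfl h1, ← Finset.mul_sum]
  congr 1
  -- decompose each integral
  have dec : ∀ a ∈ A, (∫ z : ℂ, rexp (-Complex.normSq z)
      * Complex.normSq (a - Nf A a t z / ((Df A a t z : ℝ) : ℂ)))
      = Complex.normSq a * π
        + (∫ z : ℂ, rexp (-Complex.normSq z)
            * Complex.normSq (Nf A a t z / ((Df A a t z : ℝ) : ℂ)))
        - 2 * ∫ z : ℂ, rexp (-Complex.normSq z)
            * (a * (starRingEnd ℂ) (Nf A a t z / ((Df A a t z : ℝ) : ℂ))).re := by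
    intro a ha
    have e1 : (fun z : ℂ => rexp (-Complex.normSq z)
        * Complex.normSq (a - Nf A a t z / ((Df A a t z : ℝ) : ℂ)))
        = fun z : ℂ => (rexp (-Complex.normSq z) * Complex.normSq a
            + rexp (-Complex.normSq z)
              * Complex.normSq (Nf A a t z / ((Df A a t z : ℝ) : ℂ)))
          - 2 * (rexp (-Complex.normSq z)
              * (a * (starRingEnd ℂ) (Nf A a t z / ((Df A a t z : ℝ) : ℂ))).re) := by
      funext z
      rw [Complex.normSq_sub]
      ring
    rw [e1]
    have ia : Integrable (fun z : ℂ => rexp (-Complex.normSq z) * Complex.normSq a) :=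
      integrable_gauss1.mul_const _
    have ib := integrable_gauss_nsq_est hA a hK t
    have ic := integrable_gauss_cross hA a hK (hK a ha) t
    have iab : Integrable (fun z : ℂ => rexp (-Complex.normSq z) * Complex.normSq a
        + rexp (-Complex.normSq z)
          * Complex.normSq (Nf A a t z / ((Df A a t z : ℝ) : ℂ))) := ia.add ib
    have ic2 : Integrable (fun z : ℂ => 2 * (rexp (-Complex.normSq z)
        * (a * (starRingEnd ℂ) (Nf A a t z / ((Df A a t z : ℝ) : ℂ))).re)) := ic.const_mul 2
    rw [integral_sub iab ic2, integral_add ia ib, integral_const_mul,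
      integral_mul_const, integral_gauss_complex]
    ring
  rw [Finset.sum_congr rfl dec]
  have e2 : ∑ a ∈ A, (Complex.normSq a * π
        + (∫ z : ℂ, rexp (-Complex.normSq z)
            * Complex.normSq (Nf A a t z / ((Df A a t z : ℝ) : ℂ)))
        - 2 * ∫ z : ℂ, rexp (-Complex.normSq z)
            * (a * (starRingEnd ℂ) (Nf A a t z / ((Df A a t z : ℝ) : ℂ))).re)
      = (∑ a ∈ A, (Complex.normSq a * π
          + ∫ z : ℂ, rexp (-Complex.normSq z)
            * Complex.normSq (Nf A a t z / ((Df A a t z : ℝ) : ℂ))))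
        - 2 * ∑ a ∈ A, ∫ z : ℂ, rexp (-Complex.normSq z)
            * (a * (starRingEnd ℂ) (Nf A a t z / ((Df A a t z : ℝ) : ℂ))).re := by
    rw [Finset.sum_sub_distrib, Finset.mul_sum]
  rw [e2, sym hA hK t, Finset.sum_add_distrib, Finset.sum_sub_distrib]
  ring

/-! ### the CM information functional and its derivative -/

/-- (minus the) per-constellation Gaussian log-integral functional, in amplitude param. -/
def jt (A : Finset ℂ) (t : ℝ) : ℝ :=
  -(1/(A.card:ℝ)) * ∑ a ∈ A, (1/Real.pi) *
    ∫ z : ℂ, rexp (-Complex.normSq z) * Real.log (Df A a t z)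

/-- mmse in amplitude parameter. -/
def mt (A : Finset ℂ) (t : ℝ) : ℝ :=
  (1/(A.card:ℝ)) * ∑ a ∈ A, Complex.normSq a
  - (1/(A.card:ℝ)) * ∑ a ∈ A, (1/Real.pi) *
      ∫ z : ℂ, rexp (-Complex.normSq z)
        * Complex.normSq (Nf A a t z / ((Df A a t z : ℝ) : ℂ))

lemma jt_hasDerivAt (A : Finset ℂ) (hA : A.Nonempty) {K : ℝ}
    (hK : ∀ x ∈ A, ‖x‖ ≤ K) {t : ℝ} (ht : 0 < t) :
    HasDerivAt (fun t => jt A t) (2 * t * mt A t) t := by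
  have h0 : HasDerivAt (fun t => ∑ a ∈ A,
      ∫ z : ℂ, rexp (-Complex.normSq z) * Real.log (Df A a t z))
      (∑ a ∈ A, ∫ z : ℂ, rexp (-Complex.normSq z) * (Dft A a t z / Df A a t z)) t :=
    HasDerivAt.fun_sum (fun a ha => hasDerivAt_int_log A hA a hK (hK a ha) ht)
  have h1 := h0.const_mul (-(1/(A.card:ℝ)) * (1/Real.pi))
  have hfun : (fun t => -(1/(A.card:ℝ)) * (1/Real.pi) * ∑ a ∈ A,
      ∫ z : ℂ, rexp (-Complex.normSq z) * Real.log (Df A a t z)) = fun t => jt A t := by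
    funext t
    rw [jt, ← Finset.mul_sum]
    ring
  rw [hfun] at h1
  refine h1.congr_deriv (Eq.symm ?_)
  rw [sum_deriv_eq A hA hK ht, mt]
  have hn : (0:ℝ) < A.card := by exact_mod_cast Finset.card_pos.2 hA
  have hπ := Real.pi_pos
  rw [Finset.sum_sub_distrib, ← Finset.sum_mul, ← Finset.mul_sum]
  field_simp

lemma jt_sqrt_hasDerivAt (A : Finset ℂ) (hA : A.Nonempty) {K : ℝ}
    (hK : ∀ x ∈ A, ‖x‖ ≤ K) {snr : ℝ} (hsnr : 0 < snr) :
    HasDerivAt (fun s => jt A (Real.sqrt s)) (mt A (Real.sqrt snr)) snr := by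
  have hts : 0 < Real.sqrt snr := Real.sqrt_pos.2 hsnr
  have h1 := (jt_hasDerivAt A hA hK hts).comp snr (Real.hasDerivAt_sqrt hsnr.ne')
  refine h1.congr_deriv (Eq.symm ?_)
  field_simp

/-! ### cardinality of bit-slices -/

lemma card_filter_bool (m : ℕ) (i : Fin m) (b : Bool) :
    (Finset.univ.filter (fun f : Fin m → Bool => f i = b)).card = 2^(m-1) := by
  classical
  rw [← Fintype.card_subtype]
  have e1 : {f : Fin m → Bool // f i = b}
      ≃ {f : Fin m → Bool // (fun j : {a : Fin m // a = i} => f j) = fun _ => b} := by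
    refine Equiv.subtypeEquivRight (fun f => ?_)
    constructor
    · intro h
      funext j
      rcases j with ⟨j, rfl⟩
      exact h
    · intro h
      exact congrFun h ⟨i, rfl⟩
  have e2 := Equiv.subtypePreimage (fun a : Fin m => a = i) (fun _ : {a : Fin m // a = i} => b)
  rw [Fintype.card_congr (e1.trans e2)]
  rw [Fintype.card_fun]
  congr 1
  rw [Fintype.card_subtype_compl, Fintype.card_subtype_eq, Fintype.card_fin]

lemma card_subconst (X : Finset ℂ) (m : ℕ) (μ : ℂ → (Fin m → Bool))
    (hcard : X.card = 2 ^ m) (hμ : Set.BijOn μ (X : Set ℂ) Set.univ) (i : Fin m) (b : Bool) :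
    (X.filter (fun x => μ x i = b)).card = 2^(m-1) := by
  classical
  have himg : (X.filter (fun x => μ x i = b)).image μ
      = Finset.univ.filter (fun f : Fin m → Bool => f i = b) := by
    ext f
    simp only [Finset.mem_image, Finset.mem_filter, Finset.mem_univ, true_and]
    constructor
    · rintro ⟨x, ⟨hx, hb⟩, rfl⟩
      exact hb
    · intro hb
      obtain ⟨x, hx, hxf⟩ := hμ.surjOn (Set.mem_univ f)
      exact ⟨x, ⟨hx, by rw [hxf]; exact hb⟩, hxf⟩
  have hinj : Set.InjOn μ ((X.filter (fun x => μ x i = b)) : Set ℂ) := by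
    refine hμ.injOn.mono ?_
    intro x hx
    simp only [Finset.coe_filter, Set.mem_setOf_eq] at hx
    exact hx.1
  have := Finset.card_image_of_injOn hinj
  rw [himg, card_filter_bool] at this
  exact this.symm

lemma sum_over_bool {β : Type*} [AddCommMonoid β] (X : Finset ℂ) (m : ℕ)
    (μ : ℂ → (Fin m → Bool)) (i : Fin m) (F : ℂ → β) :
    ∑ b : Bool, ∑ x ∈ X.filter (fun x => μ x i = b), F x = ∑ x ∈ X, F x := by
  classical
  rw [Fintype.sum_bool]
  rw [← Finset.sum_filter_add_sum_filter_not X (fun x => μ x i = true)]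
  congr 1
  apply Finset.sum_congr ?_ (fun _ _ => rfl)
  apply Finset.filter_congr
  intro x _
  simp [Bool.not_eq_true]

end BicmAux

section Final

open BicmAux

lemma mmse_eq_mt (A : Finset ℂ) (snr : ℝ) : mmse A snr = BicmAux.mt A (Real.sqrt snr) := by
  rw [mmse, BicmAux.mt]
  congr 1
  · congr 1
    exact Finset.sum_congr rfl fun a _ => Complex.sq_norm a
  · congr 1
    apply Finset.sum_congr rfl
    intro a _
    congr 1
    congr 1
    funext z
    have hden : (∑ a' ∈ A, ((Real.exp (-(‖((Real.sqrt snr : ℂ) * (a - a') + z)‖) ^ 2) : ℝ) : ℂ))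
        = ((BicmAux.Df A a (Real.sqrt snr) z : ℝ) : ℂ) := by
      rw [BicmAux.Df, Complex.ofReal_sum]
      exact Finset.sum_congr rfl fun a' _ => by rw [BicmAux.Ef, Complex.sq_norm]
    have hnum : (∑ a' ∈ A, a' * ((Real.exp (-(‖((Real.sqrt snr : ℂ) * (a - a') + z)‖) ^ 2) : ℝ) : ℂ))
        = BicmAux.Nf A a (Real.sqrt snr) z := by
      rw [BicmAux.Nf]
      exact Finset.sum_congr rfl fun a' _ => by rw [BicmAux.Ef, Complex.sq_norm]
    rw [hnum, hden, Complex.sq_norm, Complex.sq_norm]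
    ring

lemma Ibicm_eq (X : Finset ℂ) (m : ℕ) (μ : ℂ → (Fin m → Bool))
    (hcard : X.card = 2 ^ m) (hμ : Set.BijOn μ (X : Set ℂ) Set.univ)
    {K : ℝ} (hK : ∀ x ∈ X, ‖x‖ ≤ K) :
    Ibicm X m μ = fun s => (∑ i : Fin m, (1/2 : ℝ) * ∑ b : Bool,
      (BicmAux.jt X (Real.sqrt s) - BicmAux.jt (subconst X m μ i b) (Real.sqrt s)))
      + m * Real.log 2 := by
  funext s
  rw [Ibicm]
  have hXne : X.Nonempty := Finset.card_pos.1 (by rw [hcard]; positivity)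
  have hcX : (0:ℝ) < (X.card : ℝ) := by exact_mod_cast Finset.card_pos.2 hXne
  set t := Real.sqrt s with ht
  have main : ∀ (i : Fin m) (b : Bool),
      (1 / (2 ^ (m - 1) : ℝ)) * ∑ x ∈ subconst X m μ i b, (1 / Real.pi) *
        ∫ z : ℂ, Real.exp (-(‖z‖) ^ 2) * Real.log
          ((∑ x' ∈ subconst X m μ i b,
              Real.exp (-(‖((t : ℂ) * (x - x') + z)‖) ^ 2)) /
           ((1 / 2 : ℝ) * ∑ x' ∈ X,
              Real.exp (-(‖((t : ℂ) * (x - x') + z)‖) ^ 2)))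
      = -(BicmAux.jt (subconst X m μ i b) t)
        - (1/(2:ℝ)^(m-1)) * (∑ x ∈ subconst X m μ i b, (1/Real.pi) *
            ∫ z : ℂ, rexp (-Complex.normSq z) * Real.log (BicmAux.Df X x t z))
        + Real.log 2 := by
    intro i b
    have hsubX : subconst X m μ i b ⊆ X := Finset.filter_subset _ _
    have hcards : (subconst X m μ i b).card = 2^(m-1) := card_subconst X m μ hcard hμ i b
    have hsubne : (subconst X m μ i b).Nonempty :=
      Finset.card_pos.1 (by rw [hcards]; positivity)
    have hKsub : ∀ x ∈ subconst X m μ i b, ‖x‖ ≤ K := fun x hx => hK x (hsubX hx)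
    have hx_split : ∀ x ∈ subconst X m μ i b,
        (∫ z : ℂ, Real.exp (-(‖z‖) ^ 2) * Real.log
          ((∑ x' ∈ subconst X m μ i b,
              Real.exp (-(‖((t : ℂ) * (x - x') + z)‖) ^ 2)) /
           ((1 / 2 : ℝ) * ∑ x' ∈ X,
              Real.exp (-(‖((t : ℂ) * (x - x') + z)‖) ^ 2))))
        = (∫ z : ℂ, rexp (-Complex.normSq z)
              * Real.log (BicmAux.Df (subconst X m μ i b) x t z))
          - (∫ z : ℂ, rexp (-Complex.normSq z) * Real.log (BicmAux.Df X x t z))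
          + Real.pi * Real.log 2 := by
      intro x hx
      have e0 : (fun z : ℂ => Real.exp (-(‖z‖) ^ 2) * Real.log
          ((∑ x' ∈ subconst X m μ i b,
              Real.exp (-(‖((t : ℂ) * (x - x') + z)‖) ^ 2)) /
           ((1 / 2 : ℝ) * ∑ x' ∈ X,
              Real.exp (-(‖((t : ℂ) * (x - x') + z)‖) ^ 2))))
          = fun z : ℂ =>
            (rexp (-Complex.normSq z) * Real.log (BicmAux.Df (subconst X m μ i b) x t z)
             - rexp (-Complex.normSq z) * Real.log (BicmAux.Df X x t z))
            + rexp (-Complex.normSq z) * Real.log 2 := by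
        funext z
        have hnum_eq : (∑ x' ∈ subconst X m μ i b,
            Real.exp (-(‖((t : ℂ) * (x - x') + z)‖) ^ 2))
            = BicmAux.Df (subconst X m μ i b) x t z := by
          rw [BicmAux.Df]
          exact Finset.sum_congr rfl fun x' _ => by rw [BicmAux.Ef, Complex.sq_norm]
        have hden_eq : (∑ x' ∈ X,
            Real.exp (-(‖((t : ℂ) * (x - x') + z)‖) ^ 2))
            = BicmAux.Df X x t z := by
          rw [BicmAux.Df]
          exact Finset.sum_congr rfl fun x' _ => by rw [BicmAux.Ef, Complex.sq_norm]
        rw [hnum_eq, hden_eq, Complex.sq_norm]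
        have hp1 := BicmAux.Df_pos (A := subconst X m μ i b) (a := x) (t := t) (z := z) hsubne
        have hp2 := BicmAux.Df_pos (A := X) (a := x) (t := t) (z := z) hXne
        have hp3 : (0:ℝ) < (1/2 : ℝ) * BicmAux.Df X x t z := by linarith
        rw [Real.log_div hp1.ne' hp3.ne', Real.log_mul (by norm_num) hp2.ne']
        rw [one_div, Real.log_inv]
        ring
      rw [e0]
      have i1 := BicmAux.integrable_gauss_logDf (subconst X m μ i b) hsubne x hKsub
        (hKsub x hx) t
      have i2 := BicmAux.integrable_gauss_logDf X hXne x hK (hK x (hsubX hx)) t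
      have i3 : Integrable (fun z : ℂ => rexp (-Complex.normSq z) * Real.log 2) :=
        BicmAux.integrable_gauss1.mul_const _
      have i12 : Integrable (fun z : ℂ =>
          rexp (-Complex.normSq z) * Real.log (BicmAux.Df (subconst X m μ i b) x t z)
          - rexp (-Complex.normSq z) * Real.log (BicmAux.Df X x t z)) := i1.sub i2
      rw [integral_add i12 i3, integral_sub i1 i2, integral_mul_const,
        BicmAux.integral_gauss_complex]
    have hsum1 : ∑ x ∈ subconst X m μ i b, (1 / Real.pi) *
        ∫ z : ℂ, Real.exp (-(‖z‖) ^ 2) * Real.log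
          ((∑ x' ∈ subconst X m μ i b,
              Real.exp (-(‖((t : ℂ) * (x - x') + z)‖) ^ 2)) /
           ((1 / 2 : ℝ) * ∑ x' ∈ X,
              Real.exp (-(‖((t : ℂ) * (x - x') + z)‖) ^ 2)))
        = (∑ x ∈ subconst X m μ i b, (1/Real.pi) *
            ∫ z : ℂ, rexp (-Complex.normSq z)
              * Real.log (BicmAux.Df (subconst X m μ i b) x t z))
          - (∑ x ∈ subconst X m μ i b, (1/Real.pi) *
            ∫ z : ℂ, rexp (-Complex.normSq z) * Real.log (BicmAux.Df X x t z))
          + (subconst X m μ i b).card * Real.log 2 := by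
      have step : ∀ x ∈ subconst X m μ i b,
          (1 / Real.pi) * (∫ z : ℂ, Real.exp (-(‖z‖) ^ 2) * Real.log
            ((∑ x' ∈ subconst X m μ i b,
                Real.exp (-(‖((t : ℂ) * (x - x') + z)‖) ^ 2)) /
             ((1 / 2 : ℝ) * ∑ x' ∈ X,
                Real.exp (-(‖((t : ℂ) * (x - x') + z)‖) ^ 2))))
          = (((1/Real.pi) * ∫ z : ℂ, rexp (-Complex.normSq z)
                * Real.log (BicmAux.Df (subconst X m μ i b) x t z))
             - (1/Real.pi) * ∫ z : ℂ, rexp (-Complex.normSq z)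
                * Real.log (BicmAux.Df X x t z))
            + Real.log 2 := by
        intro x hx
        rw [hx_split x hx]
        have hπ := Real.pi_pos
        field_simp
      rw [Finset.sum_congr rfl step, Finset.sum_add_distrib, Finset.sum_const,
        nsmul_eq_mul, Finset.sum_sub_distrib]
    rw [hsum1, BicmAux.jt, hcards]
    have h2 : ((2:ℝ)^(m-1)) ≠ 0 := by positivity
    push_cast
    field_simp
  rw [Finset.sum_congr rfl (fun i _ => by
    rw [Finset.sum_congr rfl (fun b _ => main i b)])]
  -- per i simplification
  have per_i : ∀ i : Fin m, (1/2 : ℝ) * ∑ b : Bool,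
      (-(BicmAux.jt (subconst X m μ i b) t)
        - (1/(2:ℝ)^(m-1)) * (∑ x ∈ subconst X m μ i b, (1/Real.pi) *
            ∫ z : ℂ, rexp (-Complex.normSq z) * Real.log (BicmAux.Df X x t z))
        + Real.log 2)
      = (1/2 : ℝ) * (∑ b : Bool,
          (BicmAux.jt X t - BicmAux.jt (subconst X m μ i b) t)) + Real.log 2 := by
    intro i
    have hpart := BicmAux.sum_over_bool X m μ i (fun x => (1/Real.pi) *
      ∫ z : ℂ, rexp (-Complex.normSq z) * Real.log (BicmAux.Df X x t z))
    have hjX : ∑ x ∈ X, (1/Real.pi) *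
        ∫ z : ℂ, rexp (-Complex.normSq z) * Real.log (BicmAux.Df X x t z)
        = -(X.card : ℝ) * BicmAux.jt X t := by
      rw [BicmAux.jt]
      field_simp
    have h2m : ((2:ℝ))^m = 2 * 2^(m-1) := by
      have hm1 : m - 1 + 1 = m := by have := i.pos; omega
      conv_lhs => rw [← hm1]
      rw [pow_succ]
      ring
    have hcX2 : (X.card : ℝ) = (2:ℝ)^m := by rw [hcard]; push_cast; ring
    rw [Fintype.sum_bool, Fintype.sum_bool]
    rw [Fintype.sum_bool] at hpart
    have e1 : (subconst X m μ i true : Finset ℂ) = X.filter (fun x => μ x i = true) := rfl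
    have e2 : (subconst X m μ i false : Finset ℂ) = X.filter (fun x => μ x i = false) := rfl
    rw [e1, e2] at *
    rw [← hpart, hcX2, h2m] at hjX
    have h20 : ((2:ℝ)^(m-1)) ≠ 0 := by positivity
    field_simp at hjX ⊢
    linarith
  rw [Finset.sum_congr rfl (fun i _ => per_i i), Finset.sum_add_distrib, Finset.sum_const,
    Finset.card_univ, Fintype.card_fin, nsmul_eq_mul]

end Final

/-- For a constellation `X ⊂ ℂ` with `|X| = 2^m` and a bijective binary labeling
`μ : X → {0,1}^m`, the BICM mutual information is differentiable at every
`snr > 0` with derivative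
`Σ_{i=1}^m (1/2) Σ_{b∈{0,1}} (mmse_X(snr) − mmse_{X_b^i}(snr))`. -/
theorem Ibicm_hasDerivAt (X : Finset ℂ) (m : ℕ) (μ : ℂ → (Fin m → Bool))
    (hcard : X.card = 2 ^ m) (hμ : Set.BijOn μ (X : Set ℂ) Set.univ)
    (snr : ℝ) (hsnr : 0 < snr) :
    HasDerivAt (Ibicm X m μ)
      (∑ i : Fin m, (1 / 2 : ℝ) * ∑ b : Bool,
        (mmse X snr - mmse (subconst X m μ i b) snr)) snr := by
  classical
  have hXne : X.Nonempty := Finset.card_pos.1 (by rw [hcard]; positivity)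
  obtain ⟨K, hK⟩ : ∃ K, ∀ x ∈ X, ‖x‖ ≤ K :=
    ⟨X.sup' hXne (fun x => ‖x‖), fun x hx => Finset.le_sup' _ hx⟩
  rw [Ibicm_eq X m μ hcard hμ hK]
  have hd : ∀ (i : Fin m) (b : Bool), HasDerivAt
      (fun s => BicmAux.jt X (Real.sqrt s) - BicmAux.jt (subconst X m μ i b) (Real.sqrt s))
      (mmse X snr - mmse (subconst X m μ i b) snr) snr := by
    intro i b
    have hcards : (subconst X m μ i b).card = 2^(m-1) :=
      BicmAux.card_subconst X m μ hcard hμ i b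
    have hsubne : (subconst X m μ i b).Nonempty :=
      Finset.card_pos.1 (by rw [hcards]; positivity)
    have hKsub : ∀ x ∈ subconst X m μ i b, ‖x‖ ≤ K :=
      fun x hx => hK x (Finset.filter_subset _ _ hx)
    have h1 := BicmAux.jt_sqrt_hasDerivAt X hXne hK hsnr
    have h2 := BicmAux.jt_sqrt_hasDerivAt (subconst X m μ i b) hsubne hKsub hsnr
    rw [mmse_eq_mt, mmse_eq_mt]
    exact h1.sub h2
  have hsum : HasDerivAt (fun s => ∑ i : Fin m, (1/2 : ℝ) * ∑ b : Bool,
      (BicmAux.jt X (Real.sqrt s) - BicmAux.jt (subconst X m μ i b) (Real.sqrt s)))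
      (∑ i : Fin m, (1/2 : ℝ) * ∑ b : Bool,
        (mmse X snr - mmse (subconst X m μ i b) snr)) snr :=
    HasDerivAt.fun_sum (fun i _ => HasDerivAt.const_mul (1/2 : ℝ)
      (HasDerivAt.fun_sum (fun b _ => hd i b)))
  exact hsum.add_const _
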